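/- There exists a closed set V contained in the open interval (-1,1) × ℕ, closed as a subset of the product space (-1,1) × ℕ (with (-1,1) carrying the subspace topology from ℝ and ℕ discrete), such that for every subset S ⊆ ℕ there is exactly one point x ∈ (-1,1) with horizontal section V(x) = {n ∈ ℕ : (x,n) ∈ V} equal to S. -/

import Mathlib

namespace UU


def wt (p : List ℕ) : ℕ := (p.map (·+1)).sum

@[simp] lemma wt_nil : wt [] = 0 := rfl
@[simp] lemma wt_cons (k : ℕ) (p : List ℕ) : wt (k :: p) = k + 1 + wt p := by simp [wt]
@[simp] lemma wt_append (p q : List ℕ) : wt (p ++ q) = wt p + wt q := by simp [wt]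

def commitsAux : ℕ → List ℕ → Set ℕ
  | _, [] => ∅
  | t, k :: p => insert (t + k) (commitsAux (t + k + 1) p)

def commits (p : List ℕ) : Set ℕ := commitsAux 0 p

@[simp] lemma commitsAux_nil (t : ℕ) : commitsAux t [] = ∅ := rfl
@[simp] lemma commitsAux_cons (t k : ℕ) (p : List ℕ) :
    commitsAux t (k :: p) = insert (t + k) (commitsAux (t + k + 1) p) := rfl

lemma mem_commitsAux_ge {t : ℕ} {p : List ℕ} {n : ℕ} (h : n ∈ commitsAux t p) : t ≤ n := by
  induction p generalizing t with
  | nil => simp [commitsAux] at h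
  | cons k p ih =>
    simp only [commitsAux_cons, Set.mem_insert_iff] at h
    rcases h with h | h
    · omega
    · have := ih h; omega

lemma mem_commitsAux_lt {t : ℕ} {p : List ℕ} {n : ℕ} (h : n ∈ commitsAux t p) :
    n < t + wt p := by
  induction p generalizing t with
  | nil => simp [commitsAux] at h
  | cons k p ih =>
    simp only [commitsAux_cons, Set.mem_insert_iff] at h
    rcases h with h | h
    · subst h; simp; omega
    · have := ih h; simp; omega

lemma commitsAux_append (t : ℕ) (p q : List ℕ) :
    commitsAux t (p ++ q) = commitsAux t p ∪ commitsAux (t + wt p) q := by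
  induction p generalizing t with
  | nil => simp
  | cons k p ih =>
    simp only [List.cons_append, commitsAux_cons, ih, wt_cons]
    rw [Set.insert_union]
    have : t + k + 1 + wt p = t + (k + 1 + wt p) := by omega
    rw [this]

/-- the committing prefix -/
lemma exists_committing_prefix {t n : ℕ} {p : List ℕ} (h : n ∈ commitsAux t p) :
    ∃ q r, p = q ++ r ∧ t + wt q = n + 1 := by
  induction p generalizing t with
  | nil => simp [commitsAux] at h
  | cons k p ih =>
    simp only [commitsAux_cons, Set.mem_insert_iff] at h
    rcases h with h | h
    · exact ⟨[k], p, rfl, by simp; omega⟩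
    · obtain ⟨q, r, hqr, hwq⟩ := ih h
      exact ⟨k :: q, r, by simp [hqr], by simp; omega⟩

lemma commits_prefix_subset {p q : List ℕ} (h : p <+: q) : commits p ⊆ commits q := by
  obtain ⟨r, rfl⟩ := h
  unfold commits
  rw [commitsAux_append]
  exact Set.subset_union_left

/-- finiteness of paths of given weight -/
lemma finite_wt_eq (m : ℕ) : {p : List ℕ | wt p = m}.Finite := by
  induction m using Nat.strong_induction_on with
  | _ m ih =>
    rcases Nat.eq_zero_or_pos m with rfl | hm
    · apply Set.Finite.subset (Set.finite_singleton ([] : List ℕ))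
      rintro p hp
      simp only [Set.mem_setOf_eq] at hp
      cases p with
      | nil => simp
      | cons k q => simp at hp
    · have : {p : List ℕ | wt p = m} ⊆
          ⋃ k ∈ Finset.range m, (fun q => k :: q) '' {q | wt q = m - k - 1} := by
        rintro p hp
        simp only [Set.mem_setOf_eq] at hp
        cases p with
        | nil => simp at hp; omega
        | cons k q =>
          simp only [wt_cons] at hp
          simp only [Set.mem_iUnion, Finset.mem_range, Set.mem_image, Set.mem_setOf_eq]
          exact ⟨k, by omega, q, by omega, rfl⟩
      apply Set.Finite.subset _ this
      apply Set.Finite.biUnion (Finset.finite_toSet _)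
      intro k hk
      simp only [Finset.mem_coe, Finset.mem_range] at hk
      exact Set.Finite.image _ (ih (m - k - 1) (by omega))

/-! ### paths for finite sets -/

def diffsFrom : ℕ → List ℕ → List ℕ
  | _, [] => []
  | t, a :: l => (a - t) :: diffsFrom (a + 1) l

lemma commitsAux_diffsFrom {t : ℕ} : ∀ {l : List ℕ}, l.Pairwise (· < ·) →
    (∀ a ∈ l, t ≤ a) → commitsAux t (diffsFrom t l) = {n | n ∈ l} := by
  intro l
  induction l generalizing t with
  | nil => intro _ _; simp [diffsFrom]
  | cons a l ih =>
    intro hs hta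
    have ha : t ≤ a := hta a (by simp)
    have hs' : l.Pairwise (· < ·) := hs.of_cons
    have hal : ∀ b ∈ l, a + 1 ≤ b := by
      intro b hb
      have := (List.pairwise_cons.mp hs).1 b hb
      omega
    simp only [diffsFrom, commitsAux_cons]
    have h1 : t + (a - t) = a := by omega
    have h2 : t + (a - t) + 1 = a + 1 := by omega
    rw [h1, ih hs' hal]
    ext n
    simp [List.mem_cons]

lemma wt_diffsFrom {t : ℕ} : ∀ {l : List ℕ}, l.Pairwise (· < ·) →
    (∀ a ∈ l, t ≤ a) → ∀ n ∈ l, n < t + wt (diffsFrom t l) := by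
  intro l
  induction l generalizing t with
  | nil => intro _ _ n hn; simp at hn
  | cons a l ih =>
    intro hs hta n hn
    have ha : t ≤ a := hta a (by simp)
    have hal : ∀ b ∈ l, a + 1 ≤ b := by
      intro b hb
      have := (List.pairwise_cons.mp hs).1 b hb
      omega
    simp only [diffsFrom, wt_cons]
    rcases List.mem_cons.mp hn with rfl | hn'
    · omega
    · have := ih hs.of_cons hal n hn'
      omega



noncomputable def dpt (α β : ℝ) (k : ℕ) : ℝ := α + (β - α) / 2^k
noncomputable def apt (α β : ℝ) (j : ℕ) : ℝ := β - (β - α) / 2^j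

lemma dpt_zero (α β : ℝ) : dpt α β 0 = β := by simp [dpt]
lemma apt_zero (α β : ℝ) : apt α β 0 = α := by simp [apt]

lemma dpt_lt_dpt {α β : ℝ} (h : α < β) {k k' : ℕ} (hk : k < k') : dpt α β k' < dpt α β k := by
  have h2 : (2:ℝ)^k < 2^k' := by apply pow_lt_pow_right₀ (by norm_num) hk
  have hp : (0:ℝ) < 2^k := by positivity
  have hp' : (0:ℝ) < 2^k' := by positivity
  have : (β - α) / 2^k' < (β - α) / 2^k :=
    div_lt_div_of_pos_left (by linarith) hp h2
  simp only [dpt]; linarith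

lemma lt_dpt {α β : ℝ} (h : α < β) (k : ℕ) : α < dpt α β k := by
  have hp : (0:ℝ) < 2^k := by positivity
  have : 0 < (β - α) / 2^k := div_pos (by linarith) hp
  simp only [dpt]; linarith

lemma dpt_le {α β : ℝ} (h : α < β) (k : ℕ) : dpt α β k ≤ β := by
  have hp : (1:ℝ) ≤ 2^k := one_le_pow₀ (by norm_num)
  have : (β - α) / 2^k ≤ (β - α) := div_le_self (by linarith) hp
  simp only [dpt]; linarith

lemma apt_lt_apt {α β : ℝ} (h : α < β) {j j' : ℕ} (hj : j < j') : apt α β j < apt α β j' := by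
  have h2 : (2:ℝ)^j < 2^j' := by apply pow_lt_pow_right₀ (by norm_num) hj
  have hp : (0:ℝ) < 2^j := by positivity
  have : (β - α) / 2^j' < (β - α) / 2^j :=
    div_lt_div_of_pos_left (by linarith) hp h2
  simp only [apt]; linarith

lemma apt_lt {α β : ℝ} (h : α < β) (j : ℕ) : apt α β j < β := by
  have hp : (0:ℝ) < 2^j := by positivity
  have : 0 < (β - α) / 2^j := div_pos (by linarith) hp
  simp only [apt]; linarith

lemma le_apt {α β : ℝ} (h : α < β) (j : ℕ) : α ≤ apt α β j := by
  have hp : (1:ℝ) ≤ 2^j := one_le_pow₀ (by norm_num)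
  have : (β - α) / 2^j ≤ (β - α) := div_le_self (by linarith) hp
  simp only [apt]; linarith

lemma exists_small_pow {c ε : ℝ} (hc : 0 ≤ c) (hε : 0 < ε) : ∃ n : ℕ, c / 2^n < ε := by
  obtain ⟨n, hn⟩ := exists_pow_lt_of_lt_one (x := ε / (c+1)) (by positivity) (by norm_num : (1:ℝ)/2 < 1)
  refine ⟨n, ?_⟩
  have h2 : ((1:ℝ)/2)^n = 1/2^n := by rw [div_pow]; norm_num
  rw [h2] at hn
  have hp : (0:ℝ) < 2^n := by positivity
  rw [div_lt_div_iff₀ hp (by positivity : (0:ℝ) < c+1)] at hn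
  rw [div_lt_iff₀ hp]
  nlinarith

lemma exists_apt_loc {α β x : ℝ} (h : α < β) (hx : α < x) (hx' : x < β) :
    ∃ j, apt α β j < x ∧ x ≤ apt α β (j+1) := by
  classical
  have hex : ∃ m, x ≤ apt α β m := by
    obtain ⟨n, hn⟩ := exists_small_pow (c := β - α) (by linarith) (sub_pos.mpr hx')
    exact ⟨n, by simp only [apt]; linarith⟩
  have hm : x ≤ apt α β (Nat.find hex) := Nat.find_spec hex
  have hm0 : Nat.find hex ≠ 0 := by
    intro h0
    rw [h0, apt_zero] at hm
    linarith
  obtain ⟨j, hj⟩ : ∃ j, Nat.find hex = j + 1 := ⟨Nat.find hex - 1, by omega⟩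
  rw [hj] at hm
  refine ⟨j, ?_, hm⟩
  have := Nat.find_min hex (m := j) (by omega)
  push_neg at this
  exact this

lemma exists_dpt_loc {α β x : ℝ} (h : α < β) (hx : α < x) (hx' : x < β) :
    ∃ k, dpt α β (k+1) ≤ x ∧ x < dpt α β k := by
  classical
  have hex : ∃ m, dpt α β m ≤ x := by
    obtain ⟨n, hn⟩ := exists_small_pow (c := β - α) (by linarith) (sub_pos.mpr hx)
    exact ⟨n, by simp only [dpt]; linarith⟩
  have hm : dpt α β (Nat.find hex) ≤ x := Nat.find_spec hex
  have hm0 : Nat.find hex ≠ 0 := by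
    intro h0
    rw [h0, dpt_zero] at hm
    linarith
  obtain ⟨k, hk⟩ : ∃ k, Nat.find hex = k + 1 := ⟨Nat.find hex - 1, by omega⟩
  rw [hk] at hm
  refine ⟨k, hm, ?_⟩
  have := Nat.find_min hex (m := k) (by omega)
  push_neg at this
  exact this

/-! ### configurations and children -/

structure Cfg where
  lo : ℝ
  hi : ℝ
  loIn : Bool
  hiIn : Bool
  tau : ℕ

namespace Cfg
noncomputable def A (c : Cfg) : ℝ := if c.loIn then c.lo + (c.hi - c.lo)/4 else c.lo
noncomputable def g (c : Cfg) : ℝ := (c.A + c.hi)/2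
noncomputable def PL (c : Cfg) : ℝ := if c.loIn then c.A else (c.lo + c.g)/2
def mem (c : Cfg) (x : ℝ) : Prop :=
  (if c.loIn then c.lo ≤ x else c.lo < x) ∧ (if c.hiIn then x ≤ c.hi else x < c.hi)
def valid (c : Cfg) : Prop := c.lo < c.hi
end Cfg

open Cfg

noncomputable def mkTop (c : Cfg) (k : ℕ) : Cfg := ⟨dpt c.g c.hi 1, c.hi, true, true, c.tau+k+1⟩
noncomputable def mkBot (c : Cfg) (k : ℕ) : Cfg := ⟨c.lo, c.A, true, true, c.tau+k+1⟩
noncomputable def mkSL (c : Cfg) (k : ℕ) : Cfg := ⟨dpt c.lo c.PL 1, c.PL, true, true, c.tau+k+1⟩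
noncomputable def mkSR (c : Cfg) (k : ℕ) : Cfg :=
  ⟨dpt c.g c.hi 2, dpt c.g c.hi 1, true, true, c.tau+k+1⟩
noncomputable def mkML (c : Cfg) (k i : ℕ) : Cfg :=
  ⟨dpt c.lo c.PL (i+2), dpt c.lo c.PL (i+1), true, false, c.tau+k+1⟩
noncomputable def mkMR (c : Cfg) (k i s : ℕ) : Cfg :=
  ⟨dpt c.g c.hi (i+1+s), dpt c.g c.hi (i+s), true, false, c.tau+k+1⟩
noncomputable def mkAL (c : Cfg) (k j : ℕ) : Cfg :=
  ⟨apt c.PL c.g j, apt c.PL c.g (j+1), false, true, c.tau+k+1⟩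
noncomputable def mkAR (c : Cfg) (k j : ℕ) : Cfg :=
  ⟨apt (dpt c.g c.hi 1) c.hi j, apt (dpt c.g c.hi 1) c.hi (j+1), false, true, c.tau+k+1⟩

noncomputable def childTT (c : Cfg) (k : ℕ) : Cfg :=
  if k = 0 then mkTop c k else if k = 1 then mkBot c k
  else if k % 2 = 0 then mkMR c k (k/2 - 1) 1 else mkAL c k ((k-3)/2)

noncomputable def childFT (c : Cfg) (k : ℕ) : Cfg :=
  if k = 0 then mkTop c k else if k = 1 then mkSL c k
  else if k % 2 = 1 then mkML c k ((k-3)/2)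
  else if k % 4 = 2 then mkMR c k ((k-2)/4) 1 else mkAL c k ((k-4)/4)

noncomputable def childTF (c : Cfg) (k : ℕ) : Cfg :=
  if k = 0 then mkSR c k else if k = 1 then mkBot c k
  else if k % 2 = 0 then mkMR c k (k/2 - 1) 2
  else if k % 4 = 3 then mkAL c k ((k-3)/4) else mkAR c k ((k-5)/4)

noncomputable def childFF (c : Cfg) (k : ℕ) : Cfg :=
  if k = 0 then mkSR c k else if k = 1 then mkSL c k
  else if k % 2 = 1 then mkML c k ((k-3)/2)
  else if k % 4 = 2 then mkMR c k ((k-2)/4) 2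
  else if k % 8 = 4 then mkAL c k ((k-4)/8) else mkAR c k ((k-8)/8)

noncomputable def child (c : Cfg) (k : ℕ) : Cfg :=
  if c.loIn then (if c.hiIn then childTT c k else childTF c k)
  else (if c.hiIn then childFT c k else childFF c k)

lemma child_tau (c : Cfg) (k : ℕ) : (child c k).tau = c.tau + k + 1 := by
  unfold child childTT childTF childFT childFF mkTop mkBot mkSL mkSR mkML mkMR mkAL mkAR
  split_ifs <;> rfl

/-! ### basic ordering facts -/

section Facts
variable {c : Cfg}

lemma lo_le_A (hv : c.valid) : c.lo ≤ c.A := by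
  have : c.lo < c.hi := hv
  unfold Cfg.A; split_ifs <;> linarith

lemma A_lt_hi (hv : c.valid) : c.A < c.hi := by
  have : c.lo < c.hi := hv
  unfold Cfg.A; split_ifs <;> linarith

lemma A_lt_g (hv : c.valid) : c.A < c.g := by
  have := A_lt_hi hv
  unfold Cfg.g; linarith

lemma g_lt_hi (hv : c.valid) : c.g < c.hi := by
  have := A_lt_hi hv
  unfold Cfg.g; linarith

lemma lo_lt_g (hv : c.valid) : c.lo < c.g := by
  have h1 := lo_le_A hv
  have h2 := A_lt_g hv
  linarith

lemma lo_lt_PL (hv : c.valid) : c.lo < c.PL := by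
  have h1 := lo_lt_g hv
  have h2 : c.lo < c.hi := hv
  unfold Cfg.PL Cfg.A
  unfold Cfg.A at h1
  split_ifs with h
  · simp [h] at h1 ⊢; linarith
  · simp [h] at h1 ⊢; linarith

lemma PL_lt_g (hv : c.valid) : c.PL < c.g := by
  have h1 := lo_lt_g hv
  have h2 := A_lt_g hv
  unfold Cfg.PL
  split_ifs with h
  · exact h2
  · linarith

lemma PL_loIn (h : c.loIn = true) : c.PL = c.A := by
  unfold Cfg.PL; simp [h]

end Facts
/-! ### more sequence lemmas -/

lemma dpt_lt_beta {α β : ℝ} (h : α < β) {k : ℕ} (hk : 1 ≤ k) : dpt α β k < β := by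
  have h1 : dpt α β 1 < β := by
    simp only [dpt]; rw [pow_one]; linarith
  rcases Nat.eq_or_lt_of_le hk with rfl | hk'
  · exact h1
  · exact lt_trans (dpt_lt_dpt h hk') h1

lemma apt_gt_alpha {α β : ℝ} (h : α < β) {j : ℕ} (hj : 1 ≤ j) : α < apt α β j := by
  have h1 : α < apt α β 1 := by
    simp only [apt]; rw [pow_one]; linarith
  rcases Nat.eq_or_lt_of_le hj with rfl | hj'
  · exact h1
  · exact lt_trans h1 (apt_lt_apt h hj')

lemma dpt_sub {α β : ℝ} (m : ℕ) : dpt α β m - dpt α β (m+1) = (β - α)/2^(m+1) := by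
  simp only [dpt, pow_succ]
  field_simp
  ring

lemma apt_sub {α β : ℝ} (m : ℕ) : apt α β (m+1) - apt α β m = (β - α)/2^(m+1) := by
  simp only [apt, pow_succ]
  field_simp
  ring

lemma div_pow_le_half {δ : ℝ} (h : 0 ≤ δ) (m : ℕ) (hm : 1 ≤ m) : δ/2^m ≤ δ/2 := by
  have h2 : (2:ℝ) ≤ 2^m := by
    calc (2:ℝ) = 2^1 := (pow_one 2).symm
    _ ≤ 2^m := pow_le_pow_right₀ (by norm_num) hm
  rcases eq_or_lt_of_le h with h0 | h0
  · rw [← h0]; simp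
  · exact div_le_div_of_nonneg_left h (by norm_num) h2 |>.trans (le_refl _) |>.trans (le_refl _)

/-! ### membership simp lemmas -/

variable {c : Cfg} {x : ℝ} {k i j s : ℕ}

lemma mem_mkTop : (mkTop c k).mem x ↔ dpt c.g c.hi 1 ≤ x ∧ x ≤ c.hi := by
  simp [Cfg.mem, mkTop]
lemma mem_mkBot : (mkBot c k).mem x ↔ c.lo ≤ x ∧ x ≤ c.A := by
  simp [Cfg.mem, mkBot]
lemma mem_mkSL : (mkSL c k).mem x ↔ dpt c.lo c.PL 1 ≤ x ∧ x ≤ c.PL := by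
  simp [Cfg.mem, mkSL]
lemma mem_mkSR : (mkSR c k).mem x ↔ dpt c.g c.hi 2 ≤ x ∧ x ≤ dpt c.g c.hi 1 := by
  simp [Cfg.mem, mkSR]
lemma mem_mkML : (mkML c k i).mem x ↔ dpt c.lo c.PL (i+2) ≤ x ∧ x < dpt c.lo c.PL (i+1) := by
  simp [Cfg.mem, mkML]
lemma mem_mkMR : (mkMR c k i s).mem x ↔ dpt c.g c.hi (i+1+s) ≤ x ∧ x < dpt c.g c.hi (i+s) := by
  simp [Cfg.mem, mkMR]
lemma mem_mkAL : (mkAL c k j).mem x ↔ apt c.PL c.g j < x ∧ x ≤ apt c.PL c.g (j+1) := by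
  simp [Cfg.mem, mkAL]
lemma mem_mkAR : (mkAR c k j).mem x ↔
    apt (dpt c.g c.hi 1) c.hi j < x ∧ x ≤ apt (dpt c.g c.hi 1) c.hi (j+1) := by
  simp [Cfg.mem, mkAR]

lemma mem_bounds {d : Cfg} (h : d.mem x) : d.lo ≤ x ∧ x ≤ d.hi := by
  unfold Cfg.mem at h
  constructor
  · rcases h with ⟨h1, _⟩
    split_ifs at h1 <;> linarith
  · rcases h with ⟨_, h2⟩
    split_ifs at h2 <;> linarith

lemma mem_of_Icc {a b : ℝ}
    (hlo : if c.loIn then c.lo ≤ a else c.lo < a)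
    (hhi : if c.hiIn then b ≤ c.hi else b < c.hi)
    (hx : x ∈ Set.Icc a b) : c.mem x := by
  unfold Cfg.mem
  obtain ⟨h1, h2⟩ := hx
  constructor
  · split_ifs with h <;> simp [h] at hlo <;> linarith
  · split_ifs with h <;> simp [h] at hhi <;> linarith
/-! ### code lemmas : which mk each code yields -/

section CodeLemmas
variable {c : Cfg}

lemma childTT_top : childTT c 0 = mkTop c 0 := by simp [childTT]
lemma childTT_bot : childTT c 1 = mkBot c 1 := by simp [childTT]
lemma childTT_MR (i : ℕ) : childTT c (2*i+2) = mkMR c (2*i+2) i 1 := by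
  unfold childTT
  rw [if_neg (by omega), if_neg (by omega), if_pos (by omega)]
  have h : (2*i+2)/2 - 1 = i := by omega
  rw [h]
lemma childTT_AL (j : ℕ) : childTT c (2*j+3) = mkAL c (2*j+3) j := by
  unfold childTT
  rw [if_neg (by omega), if_neg (by omega), if_neg (by omega)]
  have h : (2*j+3-3)/2 = j := by omega
  rw [h]

lemma childFT_top : childFT c 0 = mkTop c 0 := by simp [childFT]
lemma childFT_SL : childFT c 1 = mkSL c 1 := by simp [childFT]
lemma childFT_ML (i : ℕ) : childFT c (2*i+3) = mkML c (2*i+3) i := by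
  unfold childFT
  rw [if_neg (by omega), if_neg (by omega), if_pos (by omega)]
  have h : (2*i+3-3)/2 = i := by omega
  rw [h]
lemma childFT_MR (i : ℕ) : childFT c (4*i+2) = mkMR c (4*i+2) i 1 := by
  unfold childFT
  rw [if_neg (by omega), if_neg (by omega), if_neg (by omega), if_pos (by omega)]
  have h : (4*i+2-2)/4 = i := by omega
  rw [h]
lemma childFT_AL (j : ℕ) : childFT c (4*j+4) = mkAL c (4*j+4) j := by
  unfold childFT
  rw [if_neg (by omega), if_neg (by omega), if_neg (by omega), if_neg (by omega)]
  have h : (4*j+4-4)/4 = j := by omega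
  rw [h]

lemma childTF_SR : childTF c 0 = mkSR c 0 := by simp [childTF]
lemma childTF_bot : childTF c 1 = mkBot c 1 := by simp [childTF]
lemma childTF_MR (i : ℕ) : childTF c (2*i+2) = mkMR c (2*i+2) i 2 := by
  unfold childTF
  rw [if_neg (by omega), if_neg (by omega), if_pos (by omega)]
  have h : (2*i+2)/2 - 1 = i := by omega
  rw [h]
lemma childTF_AL (j : ℕ) : childTF c (4*j+3) = mkAL c (4*j+3) j := by
  unfold childTF
  rw [if_neg (by omega), if_neg (by omega), if_neg (by omega), if_pos (by omega)]
  have h : (4*j+3-3)/4 = j := by omega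
  rw [h]
lemma childTF_AR (j : ℕ) : childTF c (4*j+5) = mkAR c (4*j+5) j := by
  unfold childTF
  rw [if_neg (by omega), if_neg (by omega), if_neg (by omega), if_neg (by omega)]
  have h : (4*j+5-5)/4 = j := by omega
  rw [h]

lemma childFF_SR : childFF c 0 = mkSR c 0 := by simp [childFF]
lemma childFF_SL : childFF c 1 = mkSL c 1 := by simp [childFF]
lemma childFF_ML (i : ℕ) : childFF c (2*i+3) = mkML c (2*i+3) i := by
  unfold childFF
  rw [if_neg (by omega), if_neg (by omega), if_pos (by omega)]
  have h : (2*i+3-3)/2 = i := by omega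
  rw [h]
lemma childFF_MR (i : ℕ) : childFF c (4*i+2) = mkMR c (4*i+2) i 2 := by
  unfold childFF
  rw [if_neg (by omega), if_neg (by omega), if_neg (by omega), if_pos (by omega)]
  have h : (4*i+2-2)/4 = i := by omega
  rw [h]
lemma childFF_AL (j : ℕ) : childFF c (8*j+4) = mkAL c (8*j+4) j := by
  unfold childFF
  rw [if_neg (by omega), if_neg (by omega), if_neg (by omega), if_neg (by omega),
    if_pos (by omega)]
  have h : (8*j+4-4)/8 = j := by omega
  rw [h]
lemma childFF_AR (j : ℕ) : childFF c (8*j+8) = mkAR c (8*j+8) j := by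
  unfold childFF
  rw [if_neg (by omega), if_neg (by omega), if_neg (by omega), if_neg (by omega),
    if_neg (by omega)]
  have h : (8*j+8-8)/8 = j := by omega
  rw [h]

/-! classification of codes -/

lemma classTT (k : ℕ) : k = 0 ∨ k = 1 ∨ (∃ i, k = 2*i+2) ∨ (∃ j, k = 2*j+3) := by
  rcases Nat.even_or_odd k with ⟨m, hm⟩ | ⟨m, hm⟩
  · rcases Nat.eq_zero_or_pos m with rfl | hm0
    · left; omega
    · exact Or.inr (Or.inr (Or.inl ⟨m-1, by omega⟩))
  · rcases Nat.eq_zero_or_pos m with rfl | hm0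
    · right; left; omega
    · exact Or.inr (Or.inr (Or.inr ⟨m-1, by omega⟩))

lemma classFT (k : ℕ) : k = 0 ∨ k = 1 ∨ (∃ i, k = 2*i+3) ∨ (∃ i, k = 4*i+2) ∨
    (∃ j, k = 4*j+4) := by
  have h4 : k % 4 = 0 ∨ k % 4 = 1 ∨ k % 4 = 2 ∨ k % 4 = 3 := by omega
  rcases h4 with h | h | h | h
  · rcases Nat.eq_zero_or_pos k with rfl | hk
    · left; rfl
    · exact Or.inr (Or.inr (Or.inr (Or.inr ⟨k/4 - 1, by omega⟩)))
  · rcases Nat.eq_or_lt_of_le (Nat.one_le_iff_ne_zero.mpr (by omega : k ≠ 0)) with h1 | h1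
    · right; left; omega
    · exact Or.inr (Or.inr (Or.inl ⟨(k-3)/2, by omega⟩))
  · exact Or.inr (Or.inr (Or.inr (Or.inl ⟨k/4, by omega⟩)))
  · exact Or.inr (Or.inr (Or.inl ⟨(k-3)/2, by omega⟩))

lemma classTF (k : ℕ) : k = 0 ∨ k = 1 ∨ (∃ i, k = 2*i+2) ∨ (∃ j, k = 4*j+3) ∨
    (∃ j, k = 4*j+5) := by
  have h4 : k % 4 = 0 ∨ k % 4 = 1 ∨ k % 4 = 2 ∨ k % 4 = 3 := by omega
  rcases h4 with h | h | h | h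
  · rcases Nat.eq_zero_or_pos k with rfl | hk
    · left; rfl
    · exact Or.inr (Or.inr (Or.inl ⟨k/2 - 1, by omega⟩))
  · rcases Nat.eq_or_lt_of_le (Nat.one_le_iff_ne_zero.mpr (by omega : k ≠ 0)) with h1 | h1
    · right; left; omega
    · exact Or.inr (Or.inr (Or.inr (Or.inr ⟨(k-5)/4, by omega⟩)))
  · exact Or.inr (Or.inr (Or.inl ⟨k/2 - 1, by omega⟩))
  · exact Or.inr (Or.inr (Or.inr (Or.inl ⟨(k-3)/4, by omega⟩)))

lemma classFF (k : ℕ) : k = 0 ∨ k = 1 ∨ (∃ i, k = 2*i+3) ∨ (∃ i, k = 4*i+2) ∨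
    (∃ j, k = 8*j+4) ∨ (∃ j, k = 8*j+8) := by
  have h8 : k % 8 = 0 ∨ k % 8 = 1 ∨ k % 8 = 2 ∨ k % 8 = 3 ∨ k % 8 = 4 ∨ k % 8 = 5 ∨
      k % 8 = 6 ∨ k % 8 = 7 := by omega
  rcases h8 with h | h | h | h | h | h | h | h
  · rcases Nat.eq_zero_or_pos k with rfl | hk
    · left; rfl
    · exact Or.inr (Or.inr (Or.inr (Or.inr (Or.inr ⟨k/8 - 1, by omega⟩))))
  · rcases Nat.eq_or_lt_of_le (Nat.one_le_iff_ne_zero.mpr (by omega : k ≠ 0)) with h1 | h1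
    · right; left; omega
    · exact Or.inr (Or.inr (Or.inl ⟨(k-3)/2, by omega⟩))
  · exact Or.inr (Or.inr (Or.inr (Or.inl ⟨(k-2)/4, by omega⟩)))
  · exact Or.inr (Or.inr (Or.inl ⟨(k-3)/2, by omega⟩))
  · exact Or.inr (Or.inr (Or.inr (Or.inr (Or.inl ⟨(k-4)/8, by omega⟩))))
  · exact Or.inr (Or.inr (Or.inl ⟨(k-3)/2, by omega⟩))
  · exact Or.inr (Or.inr (Or.inr (Or.inl ⟨(k-2)/4, by omega⟩)))
  · exact Or.inr (Or.inr (Or.inl ⟨(k-3)/2, by omega⟩))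

end CodeLemmas
/-! ### the per-child geometric package -/

def pack (c d : Cfg) : Prop :=
  d.valid ∧ (if c.loIn then c.lo ≤ d.lo else c.lo < d.lo) ∧
  (if c.hiIn then d.hi ≤ c.hi else d.hi < c.hi) ∧
  (d.hi < c.g ∨ c.g < d.lo) ∧ (d.hi - d.lo ≤ (c.hi - c.lo)/2)

section Packs
variable {c : Cfg} {k i j : ℕ}

lemma ifLo_of_lt {a : ℝ} (h : c.lo < a) : (if c.loIn then c.lo ≤ a else c.lo < a) := by
  split_ifs <;> linarith

lemma ifHi_of_lt {b : ℝ} (h : b < c.hi) : (if c.hiIn then b ≤ c.hi else b < c.hi) := by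
  split_ifs <;> linarith

lemma pack_Top (hv : c.valid) (hh : c.hiIn = true) : pack c (mkTop c k) := by
  have hgh := g_lt_hi hv
  have hlg := lo_lt_g hv
  have h1 : c.g < dpt c.g c.hi 1 := lt_dpt hgh 1
  have h2 : dpt c.g c.hi 1 < c.hi := dpt_lt_beta hgh le_rfl
  refine ⟨h2, ifLo_of_lt (show c.lo < dpt c.g c.hi 1 by linarith), by simp [hh, mkTop],
    Or.inr h1, ?_⟩
  show c.hi - dpt c.g c.hi 1 ≤ (c.hi - c.lo)/2
  simp only [dpt, pow_one]
  linarith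

lemma pack_Bot (hv : c.valid) (hl : c.loIn = true) : pack c (mkBot c k) := by
  have hAg := A_lt_g hv
  have hgh := g_lt_hi hv
  have hlA : c.lo < c.A := by unfold Cfg.A; rw [hl]; simp; have : c.lo < c.hi := hv; linarith
  refine ⟨hlA, by simp [hl, mkBot], ifHi_of_lt (show c.A < c.hi by linarith), Or.inl hAg, ?_⟩
  show c.A - c.lo ≤ (c.hi - c.lo)/2
  unfold Cfg.A; rw [hl]; simp
  have : c.lo < c.hi := hv
  linarith

lemma pack_SL (hv : c.valid) : pack c (mkSL c k) := by
  have hlPL := lo_lt_PL hv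
  have hPLg := PL_lt_g hv
  have hgh := g_lt_hi hv
  have h1 : c.lo < dpt c.lo c.PL 1 := lt_dpt hlPL 1
  have h2 : dpt c.lo c.PL 1 < c.PL := dpt_lt_beta hlPL le_rfl
  refine ⟨h2, ifLo_of_lt h1, ifHi_of_lt (show c.PL < c.hi by linarith),
    Or.inl (show c.PL < c.g by linarith), ?_⟩
  show c.PL - dpt c.lo c.PL 1 ≤ (c.hi - c.lo)/2
  simp only [dpt, pow_one]
  linarith

lemma pack_SR (hv : c.valid) : pack c (mkSR c k) := by
  have hgh := g_lt_hi hv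
  have hlg := lo_lt_g hv
  have h1 : c.g < dpt c.g c.hi 2 := lt_dpt hgh 2
  have h2 : dpt c.g c.hi 2 < dpt c.g c.hi 1 := dpt_lt_dpt hgh (by omega)
  have h3 : dpt c.g c.hi 1 < c.hi := dpt_lt_beta hgh le_rfl
  refine ⟨h2, ifLo_of_lt (show c.lo < dpt c.g c.hi 2 by linarith),
    ifHi_of_lt (show dpt c.g c.hi 1 < c.hi from h3), Or.inr h1, ?_⟩
  show dpt c.g c.hi 1 - dpt c.g c.hi 2 ≤ (c.hi - c.lo)/2
  simp only [dpt]
  norm_num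
  linarith

lemma pack_ML (hv : c.valid) : pack c (mkML c k i) := by
  have hlPL := lo_lt_PL hv
  have hPLg := PL_lt_g hv
  have hgh := g_lt_hi hv
  have h1 : c.lo < dpt c.lo c.PL (i+2) := lt_dpt hlPL _
  have h2 : dpt c.lo c.PL (i+2) < dpt c.lo c.PL (i+1) := dpt_lt_dpt hlPL (by omega)
  have h3 : dpt c.lo c.PL (i+1) ≤ c.PL := dpt_le hlPL _
  refine ⟨h2, ifLo_of_lt h1, ifHi_of_lt (show dpt c.lo c.PL (i+1) < c.hi by linarith),
    Or.inl (show dpt c.lo c.PL (i+1) < c.g by linarith), ?_⟩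
  show dpt c.lo c.PL (i+1) - dpt c.lo c.PL (i+2) ≤ (c.hi - c.lo)/2
  rw [dpt_sub (i+1)]
  have := div_pow_le_half (show (0:ℝ) ≤ c.PL - c.lo by linarith) (i+2) (by omega)
  have hPLhi : c.PL - c.lo ≤ c.hi - c.lo := by linarith
  have : (c.PL - c.lo)/2 ≤ (c.hi - c.lo)/2 := by linarith
  linarith

lemma pack_MR (hv : c.valid) {s : ℕ} (hs : 1 ≤ s) : pack c (mkMR c k i s) := by
  have hgh := g_lt_hi hv
  have hlg := lo_lt_g hv
  have h1 : c.g < dpt c.g c.hi (i+1+s) := lt_dpt hgh _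
  have h2 : dpt c.g c.hi (i+1+s) < dpt c.g c.hi (i+s) := dpt_lt_dpt hgh (by omega)
  have h3 : dpt c.g c.hi (i+s) < c.hi := dpt_lt_beta hgh (by omega)
  refine ⟨h2, ifLo_of_lt (show c.lo < dpt c.g c.hi (i+1+s) by linarith),
    ifHi_of_lt (show dpt c.g c.hi (i+s) < c.hi from h3), Or.inr h1, ?_⟩
  show dpt c.g c.hi (i+s) - dpt c.g c.hi (i+1+s) ≤ (c.hi - c.lo)/2
  have he : i+1+s = (i+s)+1 := by omega
  rw [he, dpt_sub (i+s)]
  have := div_pow_le_half (show (0:ℝ) ≤ c.hi - c.g by linarith) (i+s+1) (by omega)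
  have : (c.hi - c.g)/2 ≤ (c.hi - c.lo)/2 := by linarith
  linarith

lemma pack_AL (hv : c.valid) : pack c (mkAL c k j) := by
  have hPLg := PL_lt_g hv
  have hlPL := lo_lt_PL hv
  have hgh := g_lt_hi hv
  have h1 : c.PL ≤ apt c.PL c.g j := le_apt hPLg _
  have h2 : apt c.PL c.g j < apt c.PL c.g (j+1) := apt_lt_apt hPLg (by omega)
  have h3 : apt c.PL c.g (j+1) < c.g := apt_lt hPLg _
  refine ⟨h2, ifLo_of_lt (show c.lo < apt c.PL c.g j by linarith),
    ifHi_of_lt (show apt c.PL c.g (j+1) < c.hi by linarith), Or.inl h3, ?_⟩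
  show apt c.PL c.g (j+1) - apt c.PL c.g j ≤ (c.hi - c.lo)/2
  rw [apt_sub j]
  have := div_pow_le_half (show (0:ℝ) ≤ c.g - c.PL by linarith) (j+1) (by omega)
  have : (c.g - c.PL)/2 ≤ (c.hi - c.lo)/2 := by linarith
  linarith

lemma pack_AR (hv : c.valid) : pack c (mkAR c k j) := by
  have hgh := g_lt_hi hv
  have hlg := lo_lt_g hv
  have hW : c.g < dpt c.g c.hi 1 := lt_dpt hgh 1
  have hWh : dpt c.g c.hi 1 < c.hi := dpt_lt_beta hgh le_rfl
  have h1 : dpt c.g c.hi 1 ≤ apt (dpt c.g c.hi 1) c.hi j := le_apt hWh _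
  have h2 : apt (dpt c.g c.hi 1) c.hi j < apt (dpt c.g c.hi 1) c.hi (j+1) :=
    apt_lt_apt hWh (by omega)
  have h3 : apt (dpt c.g c.hi 1) c.hi (j+1) < c.hi := apt_lt hWh _
  refine ⟨h2, ifLo_of_lt (show c.lo < apt (dpt c.g c.hi 1) c.hi j by linarith),
    ifHi_of_lt (show apt (dpt c.g c.hi 1) c.hi (j+1) < c.hi from h3),
    Or.inr (show c.g < apt (dpt c.g c.hi 1) c.hi j by linarith), ?_⟩
  show apt (dpt c.g c.hi 1) c.hi (j+1) - apt (dpt c.g c.hi 1) c.hi j ≤ (c.hi - c.lo)/2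
  rw [apt_sub j]
  have := div_pow_le_half (show (0:ℝ) ≤ c.hi - dpt c.g c.hi 1 by linarith) (j+1) (by omega)
  have : (c.hi - dpt c.g c.hi 1)/2 ≤ (c.hi - c.lo)/2 := by linarith
  linarith

end Packs

section ChildPack
variable {c : Cfg} {k : ℕ}

lemma child_eq_TT (hl : c.loIn = true) (hh : c.hiIn = true) : child c k = childTT c k := by
  simp [child, hl, hh]
lemma child_eq_FT (hl : c.loIn = false) (hh : c.hiIn = true) : child c k = childFT c k := by
  simp [child, hl, hh]
lemma child_eq_TF (hl : c.loIn = true) (hh : c.hiIn = false) : child c k = childTF c k := by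
  simp [child, hl, hh]
lemma child_eq_FF (hl : c.loIn = false) (hh : c.hiIn = false) : child c k = childFF c k := by
  simp [child, hl, hh]

lemma child_pack (hv : c.valid) (k : ℕ) : pack c (child c k) := by
  rcases hl : c.loIn with _ | _ <;> rcases hh : c.hiIn with _ | _
  · -- loIn false hiIn false
    rw [child_eq_FF hl hh]
    rcases classFF k with rfl | rfl | ⟨i, rfl⟩ | ⟨i, rfl⟩ | ⟨j, rfl⟩ | ⟨j, rfl⟩
    · rw [childFF_SR]; exact pack_SR hv
    · rw [childFF_SL]; exact pack_SL hv
    · rw [childFF_ML]; exact pack_ML hv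
    · rw [childFF_MR]; exact pack_MR hv (by omega)
    · rw [childFF_AL]; exact pack_AL hv
    · rw [childFF_AR]; exact pack_AR hv
  · -- loIn false hiIn true
    rw [child_eq_FT hl hh]
    rcases classFT k with rfl | rfl | ⟨i, rfl⟩ | ⟨i, rfl⟩ | ⟨j, rfl⟩
    · rw [childFT_top]; exact pack_Top hv hh
    · rw [childFT_SL]; exact pack_SL hv
    · rw [childFT_ML]; exact pack_ML hv
    · rw [childFT_MR]; exact pack_MR hv (by omega)
    · rw [childFT_AL]; exact pack_AL hv
  · -- loIn true hiIn false
    rw [child_eq_TF hl hh]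
    rcases classTF k with rfl | rfl | ⟨i, rfl⟩ | ⟨j, rfl⟩ | ⟨j, rfl⟩
    · rw [childTF_SR]; exact pack_SR hv
    · rw [childTF_bot]; exact pack_Bot hv hl
    · rw [childTF_MR]; exact pack_MR hv (by omega)
    · rw [childTF_AL]; exact pack_AL hv
    · rw [childTF_AR]; exact pack_AR hv
  · -- loIn true hiIn true
    rw [child_eq_TT hl hh]
    rcases classTT k with rfl | rfl | ⟨i, rfl⟩ | ⟨j, rfl⟩
    · rw [childTT_top]; exact pack_Top hv hh
    · rw [childTT_bot]; exact pack_Bot hv hl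
    · rw [childTT_MR]; exact pack_MR hv (by omega)
    · rw [childTT_AL]; exact pack_AL hv
end ChildPack
/-! ### disjointness of children -/

lemma dpt_le_dpt {α β : ℝ} (h : α < β) {k k' : ℕ} (hk : k ≤ k') : dpt α β k' ≤ dpt α β k := by
  rcases Nat.eq_or_lt_of_le hk with rfl | h' 
  · exact le_refl _
  · exact le_of_lt (dpt_lt_dpt h h')

lemma apt_le_apt {α β : ℝ} (h : α < β) {j j' : ℕ} (hj : j ≤ j') : apt α β j ≤ apt α β j' := by
  rcases Nat.eq_or_lt_of_le hj with rfl | h'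
  · exact le_refl _
  · exact le_of_lt (apt_lt_apt h h')

section Disj
variable {c : Cfg} {x : ℝ} {k k' i i' j j' : ℕ}

-- same-family disjointness
lemma disj_MR_MR (hv : c.valid) {s : ℕ} (hii : i ≠ i')
    (hx : (mkMR c k i s).mem x) (hy : (mkMR c k' i' s).mem x) : False := by
  have hgh := g_lt_hi hv
  rw [mem_mkMR] at hx hy
  rcases Nat.lt_or_ge i i' with h | h
  · have : dpt c.g c.hi (i'+1+s) ≤ dpt c.g c.hi (i+1+s) := dpt_le_dpt hgh (by omega)
    have : dpt c.g c.hi (i'+s) ≤ dpt c.g c.hi (i+1+s) := dpt_le_dpt hgh (by omega)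
    -- x < dpt (i'+s) ≤ dpt (i+1+s) ≤ x
    linarith [hx.1, hy.2]
  · have hii' : i' < i := by omega
    have : dpt c.g c.hi (i+s) ≤ dpt c.g c.hi (i'+1+s) := dpt_le_dpt hgh (by omega)
    linarith [hy.1, hx.2]

lemma disj_ML_ML (hv : c.valid) (hii : i ≠ i')
    (hx : (mkML c k i).mem x) (hy : (mkML c k' i').mem x) : False := by
  have hlPL := lo_lt_PL hv
  rw [mem_mkML] at hx hy
  rcases Nat.lt_or_ge i i' with h | h
  · have : dpt c.lo c.PL (i'+1) ≤ dpt c.lo c.PL (i+2) := dpt_le_dpt hlPL (by omega)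
    linarith [hx.1, hy.2]
  · have : dpt c.lo c.PL (i+1) ≤ dpt c.lo c.PL (i'+2) := dpt_le_dpt hlPL (by omega)
    linarith [hy.1, hx.2]

lemma disj_AL_AL (hv : c.valid) (hjj : j ≠ j')
    (hx : (mkAL c k j).mem x) (hy : (mkAL c k' j').mem x) : False := by
  have hPLg := PL_lt_g hv
  rw [mem_mkAL] at hx hy
  rcases Nat.lt_or_ge j j' with h | h
  · have : apt c.PL c.g (j+1) ≤ apt c.PL c.g j' := apt_le_apt hPLg (by omega)
    linarith [hx.2, hy.1]
  · have : apt c.PL c.g (j'+1) ≤ apt c.PL c.g j := apt_le_apt hPLg (by omega)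
    linarith [hy.2, hx.1]

lemma disj_AR_AR (hv : c.valid) (hjj : j ≠ j')
    (hx : (mkAR c k j).mem x) (hy : (mkAR c k' j').mem x) : False := by
  have hgh := g_lt_hi hv
  have hWh : dpt c.g c.hi 1 < c.hi := dpt_lt_beta hgh le_rfl
  rw [mem_mkAR] at hx hy
  rcases Nat.lt_or_ge j j' with h | h
  · have : apt (dpt c.g c.hi 1) c.hi (j+1) ≤ apt (dpt c.g c.hi 1) c.hi j' :=
      apt_le_apt hWh (by omega)
    linarith [hx.2, hy.1]
  · have : apt (dpt c.g c.hi 1) c.hi (j'+1) ≤ apt (dpt c.g c.hi 1) c.hi j :=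
      apt_le_apt hWh (by omega)
    linarith [hy.2, hx.1]

-- cross-family, same side
lemma disj_Bot_AL (hv : c.valid) (hl : c.loIn = true)
    (hx : (mkBot c k).mem x) (hy : (mkAL c k' j).mem x) : False := by
  have hPLg := PL_lt_g hv
  have hPA := PL_loIn hl
  rw [mem_mkBot] at hx
  rw [mem_mkAL] at hy
  have : c.PL ≤ apt c.PL c.g j := le_apt hPLg _
  linarith [hx.2, hy.1, hPA.le, hPA.ge]

lemma disj_SL_AL (hv : c.valid)
    (hx : (mkSL c k).mem x) (hy : (mkAL c k' j).mem x) : False := by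
  have hPLg := PL_lt_g hv
  rw [mem_mkSL] at hx
  rw [mem_mkAL] at hy
  have : c.PL ≤ apt c.PL c.g j := le_apt hPLg _
  linarith [hx.2, hy.1]

lemma disj_ML_SL (hv : c.valid)
    (hx : (mkML c k i).mem x) (hy : (mkSL c k').mem x) : False := by
  have hlPL := lo_lt_PL hv
  rw [mem_mkML] at hx
  rw [mem_mkSL] at hy
  have : dpt c.lo c.PL (i+1) ≤ dpt c.lo c.PL 1 := dpt_le_dpt hlPL (by omega)
  linarith [hx.2, hy.1]

lemma disj_ML_AL (hv : c.valid)
    (hx : (mkML c k i).mem x) (hy : (mkAL c k' j).mem x) : False := by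
  have hlPL := lo_lt_PL hv
  have hPLg := PL_lt_g hv
  rw [mem_mkML] at hx
  rw [mem_mkAL] at hy
  have h1 : dpt c.lo c.PL (i+1) ≤ c.PL := dpt_le hlPL _
  have h2 : c.PL ≤ apt c.PL c.g j := le_apt hPLg _
  linarith [hx.2, hy.1]

lemma disj_Top_MR (hv : c.valid) {s : ℕ} (hs : 1 ≤ s)
    (hx : (mkTop c k).mem x) (hy : (mkMR c k' i s).mem x) : False := by
  have hgh := g_lt_hi hv
  rw [mem_mkTop] at hx
  rw [mem_mkMR] at hy
  have : dpt c.g c.hi (i+s) ≤ dpt c.g c.hi 1 := dpt_le_dpt hgh (by omega)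
  linarith [hx.1, hy.2]

lemma disj_SR_MR (hv : c.valid)
    (hx : (mkSR c k).mem x) (hy : (mkMR c k' i 2).mem x) : False := by
  have hgh := g_lt_hi hv
  rw [mem_mkSR] at hx
  rw [mem_mkMR] at hy
  have : dpt c.g c.hi (i+2) ≤ dpt c.g c.hi 2 := dpt_le_dpt hgh (by omega)
  linarith [hx.1, hy.2]

lemma disj_SR_AR (hv : c.valid)
    (hx : (mkSR c k).mem x) (hy : (mkAR c k' j).mem x) : False := by
  have hgh := g_lt_hi hv
  have hWh : dpt c.g c.hi 1 < c.hi := dpt_lt_beta hgh le_rfl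
  rw [mem_mkSR] at hx
  rw [mem_mkAR] at hy
  have : dpt c.g c.hi 1 ≤ apt (dpt c.g c.hi 1) c.hi j := le_apt hWh _
  linarith [hx.2, hy.1]

lemma disj_MR_AR (hv : c.valid)
    (hx : (mkMR c k i 2).mem x) (hy : (mkAR c k' j).mem x) : False := by
  have hgh := g_lt_hi hv
  have hWh : dpt c.g c.hi 1 < c.hi := dpt_lt_beta hgh le_rfl
  rw [mem_mkMR] at hx
  rw [mem_mkAR] at hy
  have h1 : dpt c.g c.hi (i+2) ≤ dpt c.g c.hi 1 := dpt_le_dpt hgh (by omega)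
  have h2 : dpt c.g c.hi 1 ≤ apt (dpt c.g c.hi 1) c.hi j := le_apt hWh _
  linarith [hx.2, hy.1]

-- opposite sides: left tiles vs right tiles
lemma left_lt_g_Bot (hv : c.valid) (hx : (mkBot c k).mem x) : x < c.g := by
  have := A_lt_g hv; rw [mem_mkBot] at hx; linarith [hx.2]
lemma left_lt_g_SL (hv : c.valid) (hx : (mkSL c k).mem x) : x < c.g := by
  have := PL_lt_g hv; rw [mem_mkSL] at hx; linarith [hx.2]
lemma left_lt_g_ML (hv : c.valid) (hx : (mkML c k i).mem x) : x < c.g := by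
  have h1 := lo_lt_PL hv
  have h2 := PL_lt_g hv
  rw [mem_mkML] at hx
  have : dpt c.lo c.PL (i+1) ≤ c.PL := dpt_le h1 _
  linarith [hx.2]
lemma left_lt_g_AL (hv : c.valid) (hx : (mkAL c k j).mem x) : x < c.g := by
  have := PL_lt_g hv
  rw [mem_mkAL] at hx
  have : apt c.PL c.g (j+1) < c.g := apt_lt ‹c.PL < c.g› _
  linarith [hx.2]

lemma right_gt_g_Top (hv : c.valid) (hx : (mkTop c k).mem x) : c.g < x := by
  have := g_lt_hi hv
  rw [mem_mkTop] at hx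
  have := lt_dpt ‹c.g < c.hi› 1
  linarith [hx.1]
lemma right_gt_g_SR (hv : c.valid) (hx : (mkSR c k).mem x) : c.g < x := by
  have := g_lt_hi hv
  rw [mem_mkSR] at hx
  have := lt_dpt ‹c.g < c.hi› 2
  linarith [hx.1]
lemma right_gt_g_MR (hv : c.valid) {s : ℕ} (hx : (mkMR c k i s).mem x) : c.g < x := by
  have := g_lt_hi hv
  rw [mem_mkMR] at hx
  have := lt_dpt ‹c.g < c.hi› (i+1+s)
  linarith [hx.1]
lemma right_gt_g_AR (hv : c.valid) (hx : (mkAR c k j).mem x) : c.g < x := by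
  have hgh := g_lt_hi hv
  have hW : c.g < dpt c.g c.hi 1 := lt_dpt hgh 1
  have hWh : dpt c.g c.hi 1 < c.hi := dpt_lt_beta hgh le_rfl
  rw [mem_mkAR] at hx
  have : dpt c.g c.hi 1 ≤ apt (dpt c.g c.hi 1) c.hi j := le_apt hWh _
  linarith [hx.1]

end Disj
/-! ### assembled disjointness -/

section DisjMaster
variable {c : Cfg} {x : ℝ}

lemma childTT_disj (hv : c.valid) (hl : c.loIn = true) {k k' : ℕ} (hkk : k ≠ k')
    (hx : (childTT c k).mem x) (hy : (childTT c k').mem x) : False := by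
  rcases classTT k with rfl | rfl | ⟨i, rfl⟩ | ⟨j, rfl⟩ <;>
    rcases classTT k' with rfl | rfl | ⟨i', rfl⟩ | ⟨j', rfl⟩
  · omega
  · rw [childTT_top] at hx; rw [childTT_bot] at hy
    have := right_gt_g_Top hv hx; have := left_lt_g_Bot hv hy; linarith
  · rw [childTT_top] at hx; rw [childTT_MR] at hy; exact disj_Top_MR hv le_rfl hx hy
  · rw [childTT_top] at hx; rw [childTT_AL] at hy
    have := right_gt_g_Top hv hx; have := left_lt_g_AL hv hy; linarith
  · rw [childTT_bot] at hx; rw [childTT_top] at hy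
    have := left_lt_g_Bot hv hx; have := right_gt_g_Top hv hy; linarith
  · omega
  · rw [childTT_bot] at hx; rw [childTT_MR] at hy
    have := left_lt_g_Bot hv hx; have := right_gt_g_MR hv hy; linarith
  · rw [childTT_bot] at hx; rw [childTT_AL] at hy; exact disj_Bot_AL hv hl hx hy
  · rw [childTT_MR] at hx; rw [childTT_top] at hy; exact disj_Top_MR hv le_rfl hy hx
  · rw [childTT_MR] at hx; rw [childTT_bot] at hy
    have := right_gt_g_MR hv hx; have := left_lt_g_Bot hv hy; linarith
  · rw [childTT_MR] at hx; rw [childTT_MR] at hy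
    exact disj_MR_MR hv (by omega) hx hy
  · rw [childTT_MR] at hx; rw [childTT_AL] at hy
    have := right_gt_g_MR hv hx; have := left_lt_g_AL hv hy; linarith
  · rw [childTT_AL] at hx; rw [childTT_top] at hy
    have := left_lt_g_AL hv hx; have := right_gt_g_Top hv hy; linarith
  · rw [childTT_AL] at hx; rw [childTT_bot] at hy; exact disj_Bot_AL hv hl hy hx
  · rw [childTT_AL] at hx; rw [childTT_MR] at hy
    have := left_lt_g_AL hv hx; have := right_gt_g_MR hv hy; linarith
  · rw [childTT_AL] at hx; rw [childTT_AL] at hy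
    exact disj_AL_AL hv (by omega) hx hy

lemma childFT_disj (hv : c.valid) {k k' : ℕ} (hkk : k ≠ k')
    (hx : (childFT c k).mem x) (hy : (childFT c k').mem x) : False := by
  rcases classFT k with rfl | rfl | ⟨i, rfl⟩ | ⟨i, rfl⟩ | ⟨j, rfl⟩ <;>
    rcases classFT k' with rfl | rfl | ⟨i', rfl⟩ | ⟨i', rfl⟩ | ⟨j', rfl⟩
  · omega
  · rw [childFT_top] at hx; rw [childFT_SL] at hy
    have := right_gt_g_Top hv hx; have := left_lt_g_SL hv hy; linarith
  · rw [childFT_top] at hx; rw [childFT_ML] at hy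
    have := right_gt_g_Top hv hx; have := left_lt_g_ML hv hy; linarith
  · rw [childFT_top] at hx; rw [childFT_MR] at hy; exact disj_Top_MR hv le_rfl hx hy
  · rw [childFT_top] at hx; rw [childFT_AL] at hy
    have := right_gt_g_Top hv hx; have := left_lt_g_AL hv hy; linarith
  · rw [childFT_SL] at hx; rw [childFT_top] at hy
    have := left_lt_g_SL hv hx; have := right_gt_g_Top hv hy; linarith
  · omega
  · rw [childFT_SL] at hx; rw [childFT_ML] at hy; exact disj_ML_SL hv hy hx
  · rw [childFT_SL] at hx; rw [childFT_MR] at hy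
    have := left_lt_g_SL hv hx; have := right_gt_g_MR hv hy; linarith
  · rw [childFT_SL] at hx; rw [childFT_AL] at hy; exact disj_SL_AL hv hx hy
  · rw [childFT_ML] at hx; rw [childFT_top] at hy
    have := left_lt_g_ML hv hx; have := right_gt_g_Top hv hy; linarith
  · rw [childFT_ML] at hx; rw [childFT_SL] at hy; exact disj_ML_SL hv hx hy
  · rw [childFT_ML] at hx; rw [childFT_ML] at hy
    exact disj_ML_ML hv (by omega) hx hy
  · rw [childFT_ML] at hx; rw [childFT_MR] at hy
    have := left_lt_g_ML hv hx; have := right_gt_g_MR hv hy; linarith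
  · rw [childFT_ML] at hx; rw [childFT_AL] at hy; exact disj_ML_AL hv hx hy
  · rw [childFT_MR] at hx; rw [childFT_top] at hy; exact disj_Top_MR hv le_rfl hy hx
  · rw [childFT_MR] at hx; rw [childFT_SL] at hy
    have := right_gt_g_MR hv hx; have := left_lt_g_SL hv hy; linarith
  · rw [childFT_MR] at hx; rw [childFT_ML] at hy
    have := right_gt_g_MR hv hx; have := left_lt_g_ML hv hy; linarith
  · rw [childFT_MR] at hx; rw [childFT_MR] at hy
    exact disj_MR_MR hv (by omega) hx hy
  · rw [childFT_MR] at hx; rw [childFT_AL] at hy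
    have := right_gt_g_MR hv hx; have := left_lt_g_AL hv hy; linarith
  · rw [childFT_AL] at hx; rw [childFT_top] at hy
    have := left_lt_g_AL hv hx; have := right_gt_g_Top hv hy; linarith
  · rw [childFT_AL] at hx; rw [childFT_SL] at hy; exact disj_SL_AL hv hy hx
  · rw [childFT_AL] at hx; rw [childFT_ML] at hy; exact disj_ML_AL hv hy hx
  · rw [childFT_AL] at hx; rw [childFT_MR] at hy
    have := left_lt_g_AL hv hx; have := right_gt_g_MR hv hy; linarith
  · rw [childFT_AL] at hx; rw [childFT_AL] at hy
    exact disj_AL_AL hv (by omega) hx hy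

lemma childTF_disj (hv : c.valid) (hl : c.loIn = true) {k k' : ℕ} (hkk : k ≠ k')
    (hx : (childTF c k).mem x) (hy : (childTF c k').mem x) : False := by
  rcases classTF k with rfl | rfl | ⟨i, rfl⟩ | ⟨j, rfl⟩ | ⟨j, rfl⟩ <;>
    rcases classTF k' with rfl | rfl | ⟨i', rfl⟩ | ⟨j', rfl⟩ | ⟨j', rfl⟩
  · omega
  · rw [childTF_SR] at hx; rw [childTF_bot] at hy
    have := right_gt_g_SR hv hx; have := left_lt_g_Bot hv hy; linarith
  · rw [childTF_SR] at hx; rw [childTF_MR] at hy; exact disj_SR_MR hv hx hy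
  · rw [childTF_SR] at hx; rw [childTF_AL] at hy
    have := right_gt_g_SR hv hx; have := left_lt_g_AL hv hy; linarith
  · rw [childTF_SR] at hx; rw [childTF_AR] at hy; exact disj_SR_AR hv hx hy
  · rw [childTF_bot] at hx; rw [childTF_SR] at hy
    have := left_lt_g_Bot hv hx; have := right_gt_g_SR hv hy; linarith
  · omega
  · rw [childTF_bot] at hx; rw [childTF_MR] at hy
    have := left_lt_g_Bot hv hx; have := right_gt_g_MR hv hy; linarith
  · rw [childTF_bot] at hx; rw [childTF_AL] at hy; exact disj_Bot_AL hv hl hx hy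
  · rw [childTF_bot] at hx; rw [childTF_AR] at hy
    have := left_lt_g_Bot hv hx; have := right_gt_g_AR hv hy; linarith
  · rw [childTF_MR] at hx; rw [childTF_SR] at hy; exact disj_SR_MR hv hy hx
  · rw [childTF_MR] at hx; rw [childTF_bot] at hy
    have := right_gt_g_MR hv hx; have := left_lt_g_Bot hv hy; linarith
  · rw [childTF_MR] at hx; rw [childTF_MR] at hy
    exact disj_MR_MR hv (by omega) hx hy
  · rw [childTF_MR] at hx; rw [childTF_AL] at hy
    have := right_gt_g_MR hv hx; have := left_lt_g_AL hv hy; linarith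
  · rw [childTF_MR] at hx; rw [childTF_AR] at hy; exact disj_MR_AR hv hx hy
  · rw [childTF_AL] at hx; rw [childTF_SR] at hy
    have := left_lt_g_AL hv hx; have := right_gt_g_SR hv hy; linarith
  · rw [childTF_AL] at hx; rw [childTF_bot] at hy; exact disj_Bot_AL hv hl hy hx
  · rw [childTF_AL] at hx; rw [childTF_MR] at hy
    have := left_lt_g_AL hv hx; have := right_gt_g_MR hv hy; linarith
  · rw [childTF_AL] at hx; rw [childTF_AL] at hy
    exact disj_AL_AL hv (by omega) hx hy
  · rw [childTF_AL] at hx; rw [childTF_AR] at hy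
    have := left_lt_g_AL hv hx; have := right_gt_g_AR hv hy; linarith
  · rw [childTF_AR] at hx; rw [childTF_SR] at hy; exact disj_SR_AR hv hy hx
  · rw [childTF_AR] at hx; rw [childTF_bot] at hy
    have := right_gt_g_AR hv hx; have := left_lt_g_Bot hv hy; linarith
  · rw [childTF_AR] at hx; rw [childTF_MR] at hy; exact disj_MR_AR hv hy hx
  · rw [childTF_AR] at hx; rw [childTF_AL] at hy
    have := right_gt_g_AR hv hx; have := left_lt_g_AL hv hy; linarith
  · rw [childTF_AR] at hx; rw [childTF_AR] at hy
    exact disj_AR_AR hv (by omega) hx hy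

lemma childFF_disj (hv : c.valid) {k k' : ℕ} (hkk : k ≠ k')
    (hx : (childFF c k).mem x) (hy : (childFF c k').mem x) : False := by
  rcases classFF k with rfl | rfl | ⟨i, rfl⟩ | ⟨i, rfl⟩ | ⟨j, rfl⟩ | ⟨j, rfl⟩ <;>
    rcases classFF k' with rfl | rfl | ⟨i', rfl⟩ | ⟨i', rfl⟩ | ⟨j', rfl⟩ | ⟨j', rfl⟩
  · omega
  · rw [childFF_SR] at hx; rw [childFF_SL] at hy
    have := right_gt_g_SR hv hx; have := left_lt_g_SL hv hy; linarith
  · rw [childFF_SR] at hx; rw [childFF_ML] at hy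
    have := right_gt_g_SR hv hx; have := left_lt_g_ML hv hy; linarith
  · rw [childFF_SR] at hx; rw [childFF_MR] at hy; exact disj_SR_MR hv hx hy
  · rw [childFF_SR] at hx; rw [childFF_AL] at hy
    have := right_gt_g_SR hv hx; have := left_lt_g_AL hv hy; linarith
  · rw [childFF_SR] at hx; rw [childFF_AR] at hy; exact disj_SR_AR hv hx hy
  · rw [childFF_SL] at hx; rw [childFF_SR] at hy
    have := left_lt_g_SL hv hx; have := right_gt_g_SR hv hy; linarith
  · omega
  · rw [childFF_SL] at hx; rw [childFF_ML] at hy; exact disj_ML_SL hv hy hx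
  · rw [childFF_SL] at hx; rw [childFF_MR] at hy
    have := left_lt_g_SL hv hx; have := right_gt_g_MR hv hy; linarith
  · rw [childFF_SL] at hx; rw [childFF_AL] at hy; exact disj_SL_AL hv hx hy
  · rw [childFF_SL] at hx; rw [childFF_AR] at hy
    have := left_lt_g_SL hv hx; have := right_gt_g_AR hv hy; linarith
  · rw [childFF_ML] at hx; rw [childFF_SR] at hy
    have := left_lt_g_ML hv hx; have := right_gt_g_SR hv hy; linarith
  · rw [childFF_ML] at hx; rw [childFF_SL] at hy; exact disj_ML_SL hv hx hy
  · rw [childFF_ML] at hx; rw [childFF_ML] at hy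
    exact disj_ML_ML hv (by omega) hx hy
  · rw [childFF_ML] at hx; rw [childFF_MR] at hy
    have := left_lt_g_ML hv hx; have := right_gt_g_MR hv hy; linarith
  · rw [childFF_ML] at hx; rw [childFF_AL] at hy; exact disj_ML_AL hv hx hy
  · rw [childFF_ML] at hx; rw [childFF_AR] at hy
    have := left_lt_g_ML hv hx; have := right_gt_g_AR hv hy; linarith
  · rw [childFF_MR] at hx; rw [childFF_SR] at hy; exact disj_SR_MR hv hy hx
  · rw [childFF_MR] at hx; rw [childFF_SL] at hy
    have := right_gt_g_MR hv hx; have := left_lt_g_SL hv hy; linarith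
  · rw [childFF_MR] at hx; rw [childFF_ML] at hy
    have := right_gt_g_MR hv hx; have := left_lt_g_ML hv hy; linarith
  · rw [childFF_MR] at hx; rw [childFF_MR] at hy
    exact disj_MR_MR hv (by omega) hx hy
  · rw [childFF_MR] at hx; rw [childFF_AL] at hy
    have := right_gt_g_MR hv hx; have := left_lt_g_AL hv hy; linarith
  · rw [childFF_MR] at hx; rw [childFF_AR] at hy; exact disj_MR_AR hv hx hy
  · rw [childFF_AL] at hx; rw [childFF_SR] at hy
    have := left_lt_g_AL hv hx; have := right_gt_g_SR hv hy; linarith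
  · rw [childFF_AL] at hx; rw [childFF_SL] at hy; exact disj_SL_AL hv hy hx
  · rw [childFF_AL] at hx; rw [childFF_ML] at hy; exact disj_ML_AL hv hy hx
  · rw [childFF_AL] at hx; rw [childFF_MR] at hy
    have := left_lt_g_AL hv hx; have := right_gt_g_MR hv hy; linarith
  · rw [childFF_AL] at hx; rw [childFF_AL] at hy
    exact disj_AL_AL hv (by omega) hx hy
  · rw [childFF_AL] at hx; rw [childFF_AR] at hy
    have := left_lt_g_AL hv hx; have := right_gt_g_AR hv hy; linarith
  · rw [childFF_AR] at hx; rw [childFF_SR] at hy; exact disj_SR_AR hv hy hx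
  · rw [childFF_AR] at hx; rw [childFF_SL] at hy
    have := right_gt_g_AR hv hx; have := left_lt_g_SL hv hy; linarith
  · rw [childFF_AR] at hx; rw [childFF_ML] at hy
    have := right_gt_g_AR hv hx; have := left_lt_g_ML hv hy; linarith
  · rw [childFF_AR] at hx; rw [childFF_MR] at hy; exact disj_MR_AR hv hy hx
  · rw [childFF_AR] at hx; rw [childFF_AL] at hy
    have := right_gt_g_AR hv hx; have := left_lt_g_AL hv hy; linarith
  · rw [childFF_AR] at hx; rw [childFF_AR] at hy
    exact disj_AR_AR hv (by omega) hx hy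

lemma child_disjoint (hv : c.valid) {k k' : ℕ} (hkk : k ≠ k')
    (hx : (child c k).mem x) (hy : (child c k').mem x) : False := by
  rcases hl : c.loIn with _ | _ <;> rcases hh : c.hiIn with _ | _
  · rw [child_eq_FF hl hh] at hx hy; exact childFF_disj hv hkk hx hy
  · rw [child_eq_FT hl hh] at hx hy; exact childFT_disj hv hkk hx hy
  · rw [child_eq_TF hl hh] at hx hy; exact childTF_disj hv hl hkk hx hy
  · rw [child_eq_TT hl hh] at hx hy; exact childTT_disj hv hl hkk hx hy

end DisjMaster
/-! ### coverage -/

section Cover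
variable {c : Cfg} {x : ℝ}

lemma cover_left (hv : c.valid) (hxg : x < c.g)
    (hlo : if c.loIn then c.lo ≤ x else c.lo < x) :
    ∃ k, (child c k).mem x := by
  have hlPL := lo_lt_PL hv
  have hPLg := PL_lt_g hv
  have hd1PL : dpt c.lo c.PL 1 < c.PL := dpt_lt_beta hlPL le_rfl
  rcases hl : c.loIn with _ | _ <;> rcases hh : c.hiIn with _ | _
  -- loIn = false, hiIn = false
  · replace hlo : c.lo < x := by simpa [hl] using hlo
    rcases le_or_gt x c.PL with hxP | hxP
    · rcases le_or_gt (dpt c.lo c.PL 1) x with hdx | hdx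
      · exact ⟨1, by rw [child_eq_FF hl hh, childFF_SL, mem_mkSL]; exact ⟨hdx, hxP⟩⟩
      · obtain ⟨m, hm1, hm2⟩ := exists_dpt_loc hlPL hlo (by linarith)
        have hm0 : m ≠ 0 := by
          intro h0; rw [h0] at hm1; norm_num at hm1; linarith
        obtain ⟨i, hi⟩ : ∃ i, m = i + 1 := ⟨m - 1, by omega⟩
        rw [hi] at hm1 hm2
        exact ⟨2*i+3, by rw [child_eq_FF hl hh, childFF_ML, mem_mkML]; exact ⟨hm1, hm2⟩⟩
    · obtain ⟨j, hj1, hj2⟩ := exists_apt_loc hPLg hxP hxg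
      exact ⟨8*j+4, by rw [child_eq_FF hl hh, childFF_AL, mem_mkAL]; exact ⟨hj1, hj2⟩⟩
  -- loIn = false, hiIn = true
  · replace hlo : c.lo < x := by simpa [hl] using hlo
    rcases le_or_gt x c.PL with hxP | hxP
    · rcases le_or_gt (dpt c.lo c.PL 1) x with hdx | hdx
      · exact ⟨1, by rw [child_eq_FT hl hh, childFT_SL, mem_mkSL]; exact ⟨hdx, hxP⟩⟩
      · obtain ⟨m, hm1, hm2⟩ := exists_dpt_loc hlPL hlo (by linarith)
        have hm0 : m ≠ 0 := by
          intro h0; rw [h0] at hm1; norm_num at hm1; linarith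
        obtain ⟨i, hi⟩ : ∃ i, m = i + 1 := ⟨m - 1, by omega⟩
        rw [hi] at hm1 hm2
        exact ⟨2*i+3, by rw [child_eq_FT hl hh, childFT_ML, mem_mkML]; exact ⟨hm1, hm2⟩⟩
    · obtain ⟨j, hj1, hj2⟩ := exists_apt_loc hPLg hxP hxg
      exact ⟨4*j+4, by rw [child_eq_FT hl hh, childFT_AL, mem_mkAL]; exact ⟨hj1, hj2⟩⟩
  -- loIn = true, hiIn = false
  · replace hlo : c.lo ≤ x := by simpa [hl] using hlo
    have hPA := PL_loIn hl
    rcases le_or_gt x c.A with hxA | hxA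
    · exact ⟨1, by rw [child_eq_TF hl hh, childTF_bot, mem_mkBot]; exact ⟨hlo, hxA⟩⟩
    · obtain ⟨j, hj1, hj2⟩ := exists_apt_loc hPLg (by rw [hPA]; exact hxA) hxg
      exact ⟨4*j+3, by rw [child_eq_TF hl hh, childTF_AL, mem_mkAL]; exact ⟨hj1, hj2⟩⟩
  -- loIn = true, hiIn = true
  · replace hlo : c.lo ≤ x := by simpa [hl] using hlo
    have hPA := PL_loIn hl
    rcases le_or_gt x c.A with hxA | hxA
    · exact ⟨1, by rw [child_eq_TT hl hh, childTT_bot, mem_mkBot]; exact ⟨hlo, hxA⟩⟩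
    · obtain ⟨j, hj1, hj2⟩ := exists_apt_loc hPLg (by rw [hPA]; exact hxA) hxg
      exact ⟨2*j+3, by rw [child_eq_TT hl hh, childTT_AL, mem_mkAL]; exact ⟨hj1, hj2⟩⟩

lemma cover_right (hv : c.valid) (hxg : c.g < x)
    (hhi : if c.hiIn then x ≤ c.hi else x < c.hi) :
    ∃ k, (child c k).mem x := by
  have hgh := g_lt_hi hv
  have hd21 : dpt c.g c.hi 2 < dpt c.g c.hi 1 := dpt_lt_dpt hgh (by omega)
  have hd1h : dpt c.g c.hi 1 < c.hi := dpt_lt_beta hgh le_rfl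
  rcases hl : c.loIn with _ | _ <;> rcases hh : c.hiIn with _ | _
  -- loIn = false, hiIn = false
  · replace hhi : x < c.hi := by simpa [hh] using hhi
    rcases lt_or_ge (dpt c.g c.hi 1) x with hdx | hdx
    · obtain ⟨j, hj1, hj2⟩ := exists_apt_loc hd1h hdx hhi
      exact ⟨8*j+8, by rw [child_eq_FF hl hh, childFF_AR, mem_mkAR]; exact ⟨hj1, hj2⟩⟩
    · rcases le_or_gt (dpt c.g c.hi 2) x with hd2 | hd2
      · exact ⟨0, by rw [child_eq_FF hl hh, childFF_SR, mem_mkSR]; exact ⟨hd2, hdx⟩⟩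
      · obtain ⟨m, hm1, hm2⟩ := exists_dpt_loc hgh hxg (by linarith)
        have hm0 : 2 ≤ m := by
          by_contra hcon
          push_neg at hcon
          rcases (by omega : m = 0 ∨ m = 1) with rfl | rfl
          · norm_num at hm1; linarith
          · norm_num at hm1; linarith
        obtain ⟨i, hi⟩ : ∃ i, m = i + 2 := ⟨m - 2, by omega⟩
        rw [hi] at hm1 hm2
        refine ⟨4*i+2, ?_⟩
        rw [child_eq_FF hl hh, childFF_MR, mem_mkMR]
        constructor
        · have : i + 1 + 2 = i + 2 + 1 := by omega
          rw [this]; exact hm1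
        · exact hm2
  -- loIn = false, hiIn = true
  · replace hhi : x ≤ c.hi := by simpa [hh] using hhi
    rcases le_or_gt (dpt c.g c.hi 1) x with hdx | hdx
    · exact ⟨0, by rw [child_eq_FT hl hh, childFT_top, mem_mkTop]; exact ⟨hdx, hhi⟩⟩
    · obtain ⟨m, hm1, hm2⟩ := exists_dpt_loc hgh hxg (by linarith)
      have hm0 : 1 ≤ m := by
        by_contra hcon
        push_neg at hcon
        rcases (by omega : m = 0) with rfl
        norm_num at hm1; linarith
      obtain ⟨i, hi⟩ : ∃ i, m = i + 1 := ⟨m - 1, by omega⟩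
      rw [hi] at hm1 hm2
      refine ⟨4*i+2, ?_⟩
      rw [child_eq_FT hl hh, childFT_MR, mem_mkMR]
      constructor
      · have : i + 1 + 1 = i + 1 + 1 := rfl
        exact hm1
      · exact hm2
  -- loIn = true, hiIn = false
  · replace hhi : x < c.hi := by simpa [hh] using hhi
    rcases lt_or_ge (dpt c.g c.hi 1) x with hdx | hdx
    · obtain ⟨j, hj1, hj2⟩ := exists_apt_loc hd1h hdx hhi
      exact ⟨4*j+5, by rw [child_eq_TF hl hh, childTF_AR, mem_mkAR]; exact ⟨hj1, hj2⟩⟩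
    · rcases le_or_gt (dpt c.g c.hi 2) x with hd2 | hd2
      · exact ⟨0, by rw [child_eq_TF hl hh, childTF_SR, mem_mkSR]; exact ⟨hd2, hdx⟩⟩
      · obtain ⟨m, hm1, hm2⟩ := exists_dpt_loc hgh hxg (by linarith)
        have hm0 : 2 ≤ m := by
          by_contra hcon
          push_neg at hcon
          rcases (by omega : m = 0 ∨ m = 1) with rfl | rfl
          · norm_num at hm1; linarith
          · norm_num at hm1; linarith
        obtain ⟨i, hi⟩ : ∃ i, m = i + 2 := ⟨m - 2, by omega⟩
        rw [hi] at hm1 hm2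
        refine ⟨2*i+2, ?_⟩
        rw [child_eq_TF hl hh, childTF_MR, mem_mkMR]
        constructor
        · have h' : i + 1 + 2 = i + 2 + 1 := by omega
          rw [h']; exact hm1
        · exact hm2
  -- loIn = true, hiIn = true
  · replace hhi : x ≤ c.hi := by simpa [hh] using hhi
    rcases le_or_gt (dpt c.g c.hi 1) x with hdx | hdx
    · exact ⟨0, by rw [child_eq_TT hl hh, childTT_top, mem_mkTop]; exact ⟨hdx, hhi⟩⟩
    · obtain ⟨m, hm1, hm2⟩ := exists_dpt_loc hgh hxg (by linarith)
      have hm0 : 1 ≤ m := by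
        by_contra hcon
        push_neg at hcon
        rcases (by omega : m = 0) with rfl
        norm_num at hm1; linarith
      obtain ⟨i, hi⟩ : ∃ i, m = i + 1 := ⟨m - 1, by omega⟩
      rw [hi] at hm1 hm2
      exact ⟨2*i+2, by rw [child_eq_TT hl hh, childTT_MR, mem_mkMR]; exact ⟨hm1, hm2⟩⟩

lemma child_cover (hv : c.valid) (hx : c.mem x) :
    x = c.g ∨ ∃ k, (child c k).mem x := by
  rcases lt_trichotomy x c.g with h | h | h
  · exact Or.inr (cover_left hv h hx.1)
  · exact Or.inl h
  · exact Or.inr (cover_right hv h hx.2)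

end Cover
/-! ### paths of regions -/

noncomputable def regFrom (c : Cfg) (p : List ℕ) : Cfg := p.foldl child c

@[simp] lemma regFrom_nil (c : Cfg) : regFrom c [] = c := rfl
@[simp] lemma regFrom_cons (c : Cfg) (k : ℕ) (p : List ℕ) :
    regFrom c (k :: p) = regFrom (child c k) p := rfl
lemma regFrom_append (c : Cfg) (p q : List ℕ) :
    regFrom c (p ++ q) = regFrom (regFrom c p) q := by
  simp [regFrom, List.foldl_append]

lemma child_valid {c : Cfg} (hv : c.valid) (k : ℕ) : (child c k).valid :=
  (child_pack hv k).1

lemma regFrom_valid {c : Cfg} (hv : c.valid) (p : List ℕ) : (regFrom c p).valid := by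
  induction p generalizing c with
  | nil => exact hv
  | cons k p ih => exact ih (child_valid hv k)

lemma regFrom_tau (c : Cfg) (p : List ℕ) : (regFrom c p).tau = c.tau + wt p := by
  induction p generalizing c with
  | nil => simp
  | cons k p ih =>
    rw [regFrom_cons, ih, child_tau, wt_cons]
    omega

lemma child_mem_sub {c : Cfg} (hv : c.valid) (k : ℕ) {x : ℝ} (hx : (child c k).mem x) :
    c.mem x := by
  obtain ⟨hv', hlo, hhi, _, _⟩ := child_pack hv k
  obtain ⟨h1, h2⟩ := mem_bounds hx
  exact mem_of_Icc hlo hhi ⟨h1, h2⟩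

lemma regFrom_mem_sub {c : Cfg} (hv : c.valid) (p : List ℕ) {x : ℝ}
    (hx : (regFrom c p).mem x) : c.mem x := by
  induction p generalizing c with
  | nil => exact hx
  | cons k p ih => exact child_mem_sub hv k (ih (child_valid hv k) hx)

lemma child_mem_ne_g {c : Cfg} (hv : c.valid) (k : ℕ) {x : ℝ} (hx : (child c k).mem x) :
    x ≠ c.g := by
  obtain ⟨_, _, _, hside, _⟩ := child_pack hv k
  obtain ⟨h1, h2⟩ := mem_bounds hx
  rcases hside with h | h
  · intro he; rw [he] at h2; linarith
  · intro he; rw [he] at h1; linarith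

lemma regFrom_mem_ne_g {c : Cfg} (hv : c.valid) {p : List ℕ} (hp : p ≠ []) {x : ℝ}
    (hx : (regFrom c p).mem x) : x ≠ c.g := by
  cases p with
  | nil => exact absurd rfl hp
  | cons k p =>
    rw [regFrom_cons] at hx
    exact child_mem_ne_g hv k (regFrom_mem_sub (child_valid hv k) p hx)

lemma g_mem {c : Cfg} (hv : c.valid) : c.mem c.g := by
  have h1 := lo_lt_g hv
  have h2 := g_lt_hi hv
  unfold Cfg.mem
  constructor
  · split_ifs <;> linarith
  · split_ifs <;> linarith

/-- comparability -/
lemma regFrom_comparable {c : Cfg} (hv : c.valid) {p q : List ℕ} {x : ℝ}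
    (hp : (regFrom c p).mem x) (hq : (regFrom c q).mem x) : p <+: q ∨ q <+: p := by
  induction p generalizing c q with
  | nil => exact Or.inl (List.nil_prefix)
  | cons k p ih =>
    cases q with
    | nil => exact Or.inr (List.nil_prefix)
    | cons k' q =>
      rw [regFrom_cons] at hp hq
      have hk : k = k' := by
        by_contra hne
        exact child_disjoint hv hne
          (regFrom_mem_sub (child_valid hv k) p hp)
          (regFrom_mem_sub (child_valid hv k') q hq)
      subst hk
      rcases ih (child_valid hv k) hp hq with h | h
      · exact Or.inl (List.cons_prefix_cons.mpr ⟨rfl, h⟩)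
      · exact Or.inr (List.cons_prefix_cons.mpr ⟨rfl, h⟩)

/-! ### top and bottom chains -/

lemma child0_spec {c : Cfg} (hv : c.valid) (hh : c.hiIn = true) :
    (child c 0).hi = c.hi ∧ (child c 0).hiIn = true ∧ (child c 0).mem c.hi := by
  have hgh := g_lt_hi hv
  have h1 : dpt c.g c.hi 1 ≤ c.hi := dpt_le hgh 1
  rcases hl : c.loIn with _ | _
  · rw [child_eq_FT hl hh, childFT_top]
    exact ⟨rfl, rfl, by rw [mem_mkTop]; exact ⟨h1, le_refl _⟩⟩
  · rw [child_eq_TT hl hh, childTT_top]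
    exact ⟨rfl, rfl, by rw [mem_mkTop]; exact ⟨h1, le_refl _⟩⟩

lemma child1_spec {c : Cfg} (hv : c.valid) (hl : c.loIn = true) :
    (child c 1).lo = c.lo ∧ (child c 1).loIn = true ∧ (child c 1).mem c.lo := by
  have hlA : c.lo < c.A := by
    unfold Cfg.A; rw [hl]; simp
    have : c.lo < c.hi := hv
    linarith
  rcases hh : c.hiIn with _ | _
  · rw [child_eq_TF hl hh, childTF_bot]
    exact ⟨rfl, rfl, by rw [mem_mkBot]; exact ⟨le_refl _, le_of_lt hlA⟩⟩
  · rw [child_eq_TT hl hh, childTT_bot]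
    exact ⟨rfl, rfl, by rw [mem_mkBot]; exact ⟨le_refl _, le_of_lt hlA⟩⟩

lemma top_chain {c : Cfg} (hv : c.valid) (hh : c.hiIn = true) (d : ℕ) :
    (regFrom c (List.replicate d 0)).mem c.hi := by
  induction d generalizing c with
  | zero =>
    simp only [List.replicate, regFrom_nil]
    unfold Cfg.mem
    have : c.lo < c.hi := hv
    constructor
    · split_ifs <;> linarith
    · rw [hh]; simp
  | succ d ih =>
    rw [List.replicate_succ, regFrom_cons]
    obtain ⟨h1, h2, h3⟩ := child0_spec hv hh
    have := ih (c := child c 0) (child_valid hv 0) h2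
    rw [h1] at this
    exact this

lemma bot_chain {c : Cfg} (hv : c.valid) (hl : c.loIn = true) (d : ℕ) :
    (regFrom c (List.replicate d 1)).mem c.lo := by
  induction d generalizing c with
  | zero =>
    simp only [List.replicate, regFrom_nil]
    unfold Cfg.mem
    have : c.lo < c.hi := hv
    constructor
    · rw [hl]; simp
    · split_ifs <;> linarith
  | succ d ih =>
    rw [List.replicate_succ, regFrom_cons]
    obtain ⟨h1, h2, h3⟩ := child1_spec hv hl
    have := ih (c := child c 1) (child_valid hv 1) h2
    rw [h1] at this
    exact this

/-! ### commits of replicate paths -/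

lemma commits_replicate0 {t m d : ℕ} (hm : m < d) :
    (t + m) ∈ commitsAux t (List.replicate d 0) := by
  induction d generalizing t m with
  | zero => omega
  | succ d ih =>
    rw [List.replicate_succ, commitsAux_cons, Set.mem_insert_iff]
    rcases Nat.eq_zero_or_pos m with rfl | hm0
    · exact Or.inl rfl
    · refine Or.inr ?_
      have h := ih (t := t + 0 + 1) (m := m - 1) (by omega)
      have he : t + 0 + 1 + (m - 1) = t + m := by omega
      rw [he] at h
      exact h

lemma commits_replicate1 {t m d : ℕ} (hm : m < d) :
    (t + 2*m + 1) ∈ commitsAux t (List.replicate d 1) := by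
  induction d generalizing t m with
  | zero => omega
  | succ d ih =>
    rw [List.replicate_succ, commitsAux_cons, Set.mem_insert_iff]
    rcases Nat.eq_zero_or_pos m with rfl | hm0
    · exact Or.inl (by omega)
    · refine Or.inr ?_
      have h := ih (t := t + 1 + 1) (m := m - 1) (by omega)
      have he : t + 1 + 1 + 2*(m-1) + 1 = t + 2*m + 1 := by omega
      rw [he] at h
      exact h
/-! ### service: excluded endpoints are siblings' closed endpoints -/

section Service
variable {c : Cfg}

lemma service_lo (hv : c.valid) {k : ℕ} (hlo : (child c k).loIn = false) :
    ∃ k' < k, (child c k').hiIn = true ∧ (child c k').hi = (child c k).lo := by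
  rcases hl : c.loIn with _ | _ <;> rcases hh : c.hiIn with _ | _
  · -- FF
    rw [child_eq_FF hl hh] at hlo
    rcases classFF k with rfl | rfl | ⟨i, rfl⟩ | ⟨i, rfl⟩ | ⟨j, rfl⟩ | ⟨j, rfl⟩
    · rw [childFF_SR] at hlo; simp [mkSR] at hlo
    · rw [childFF_SL] at hlo; simp [mkSL] at hlo
    · rw [childFF_ML] at hlo; simp [mkML] at hlo
    · rw [childFF_MR] at hlo; simp [mkMR] at hlo
    · rcases j with _ | j'
      · refine ⟨1, by omega, ?_⟩
        rw [child_eq_FF hl hh, child_eq_FF hl hh, childFF_SL, childFF_AL]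
        refine ⟨rfl, ?_⟩
        show c.PL = apt c.PL c.g 0
        rw [apt_zero]
      · refine ⟨8*j'+4, by omega, ?_⟩
        rw [child_eq_FF hl hh, child_eq_FF hl hh, childFF_AL, childFF_AL]
        exact ⟨rfl, rfl⟩
    · rcases j with _ | j'
      · refine ⟨0, by omega, ?_⟩
        rw [child_eq_FF hl hh, child_eq_FF hl hh, childFF_SR, childFF_AR]
        refine ⟨rfl, ?_⟩
        show dpt c.g c.hi 1 = apt (dpt c.g c.hi 1) c.hi 0
        rw [apt_zero]
      · refine ⟨8*j'+8, by omega, ?_⟩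
        rw [child_eq_FF hl hh, child_eq_FF hl hh, childFF_AR, childFF_AR]
        exact ⟨rfl, rfl⟩
  · -- FT
    rw [child_eq_FT hl hh] at hlo
    rcases classFT k with rfl | rfl | ⟨i, rfl⟩ | ⟨i, rfl⟩ | ⟨j, rfl⟩
    · rw [childFT_top] at hlo; simp [mkTop] at hlo
    · rw [childFT_SL] at hlo; simp [mkSL] at hlo
    · rw [childFT_ML] at hlo; simp [mkML] at hlo
    · rw [childFT_MR] at hlo; simp [mkMR] at hlo
    · rcases j with _ | j'
      · refine ⟨1, by omega, ?_⟩
        rw [child_eq_FT hl hh, child_eq_FT hl hh, childFT_SL, childFT_AL]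
        refine ⟨rfl, ?_⟩
        show c.PL = apt c.PL c.g 0
        rw [apt_zero]
      · refine ⟨4*j'+4, by omega, ?_⟩
        rw [child_eq_FT hl hh, child_eq_FT hl hh, childFT_AL, childFT_AL]
        exact ⟨rfl, rfl⟩
  · -- TF
    rw [child_eq_TF hl hh] at hlo
    rcases classTF k with rfl | rfl | ⟨i, rfl⟩ | ⟨j, rfl⟩ | ⟨j, rfl⟩
    · rw [childTF_SR] at hlo; simp [mkSR] at hlo
    · rw [childTF_bot] at hlo; simp [mkBot] at hlo
    · rw [childTF_MR] at hlo; simp [mkMR] at hlo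
    · rcases j with _ | j'
      · refine ⟨1, by omega, ?_⟩
        rw [child_eq_TF hl hh, child_eq_TF hl hh, childTF_bot, childTF_AL]
        refine ⟨rfl, ?_⟩
        show c.A = apt c.PL c.g 0
        rw [apt_zero, PL_loIn hl]
      · refine ⟨4*j'+3, by omega, ?_⟩
        rw [child_eq_TF hl hh, child_eq_TF hl hh, childTF_AL, childTF_AL]
        exact ⟨rfl, rfl⟩
    · rcases j with _ | j'
      · refine ⟨0, by omega, ?_⟩
        rw [child_eq_TF hl hh, child_eq_TF hl hh, childTF_SR, childTF_AR]
        refine ⟨rfl, ?_⟩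
        show dpt c.g c.hi 1 = apt (dpt c.g c.hi 1) c.hi 0
        rw [apt_zero]
      · refine ⟨4*j'+5, by omega, ?_⟩
        rw [child_eq_TF hl hh, child_eq_TF hl hh, childTF_AR, childTF_AR]
        exact ⟨rfl, rfl⟩
  · -- TT
    rw [child_eq_TT hl hh] at hlo
    rcases classTT k with rfl | rfl | ⟨i, rfl⟩ | ⟨j, rfl⟩
    · rw [childTT_top] at hlo; simp [mkTop] at hlo
    · rw [childTT_bot] at hlo; simp [mkBot] at hlo
    · rw [childTT_MR] at hlo; simp [mkMR] at hlo
    · rcases j with _ | j'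
      · refine ⟨1, by omega, ?_⟩
        rw [child_eq_TT hl hh, child_eq_TT hl hh, childTT_bot, childTT_AL]
        refine ⟨rfl, ?_⟩
        show c.A = apt c.PL c.g 0
        rw [apt_zero, PL_loIn hl]
      · refine ⟨2*j'+3, by omega, ?_⟩
        rw [child_eq_TT hl hh, child_eq_TT hl hh, childTT_AL, childTT_AL]
        exact ⟨rfl, rfl⟩

lemma service_hi (hv : c.valid) {k : ℕ} (hhi : (child c k).hiIn = false) :
    ∃ k', k' + 2 ≤ k ∧ (k - k') % 2 = 0 ∧ (child c k').loIn = true ∧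
      (child c k').lo = (child c k).hi := by
  rcases hl : c.loIn with _ | _ <;> rcases hh : c.hiIn with _ | _
  · -- FF
    rw [child_eq_FF hl hh] at hhi
    rcases classFF k with rfl | rfl | ⟨i, rfl⟩ | ⟨i, rfl⟩ | ⟨j, rfl⟩ | ⟨j, rfl⟩
    · rw [childFF_SR] at hhi; simp [mkSR] at hhi
    · rw [childFF_SL] at hhi; simp [mkSL] at hhi
    · rcases i with _ | i'
      · refine ⟨1, by omega, by omega, ?_⟩
        rw [child_eq_FF hl hh, child_eq_FF hl hh, childFF_SL, childFF_ML]
        exact ⟨rfl, rfl⟩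
      · refine ⟨2*i'+3, by omega, by omega, ?_⟩
        rw [child_eq_FF hl hh, child_eq_FF hl hh, childFF_ML, childFF_ML]
        exact ⟨rfl, rfl⟩
    · rcases i with _ | i'
      · refine ⟨0, by omega, by omega, ?_⟩
        rw [child_eq_FF hl hh, child_eq_FF hl hh, childFF_SR, childFF_MR]
        exact ⟨rfl, rfl⟩
      · refine ⟨4*i'+2, by omega, by omega, ?_⟩
        rw [child_eq_FF hl hh, child_eq_FF hl hh, childFF_MR, childFF_MR]
        exact ⟨rfl, rfl⟩
    · rw [childFF_AL] at hhi; simp [mkAL] at hhi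
    · rw [childFF_AR] at hhi; simp [mkAR] at hhi
  · -- FT
    rw [child_eq_FT hl hh] at hhi
    rcases classFT k with rfl | rfl | ⟨i, rfl⟩ | ⟨i, rfl⟩ | ⟨j, rfl⟩
    · rw [childFT_top] at hhi; simp [mkTop] at hhi
    · rw [childFT_SL] at hhi; simp [mkSL] at hhi
    · rcases i with _ | i'
      · refine ⟨1, by omega, by omega, ?_⟩
        rw [child_eq_FT hl hh, child_eq_FT hl hh, childFT_SL, childFT_ML]
        exact ⟨rfl, rfl⟩
      · refine ⟨2*i'+3, by omega, by omega, ?_⟩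
        rw [child_eq_FT hl hh, child_eq_FT hl hh, childFT_ML, childFT_ML]
        exact ⟨rfl, rfl⟩
    · rcases i with _ | i'
      · refine ⟨0, by omega, by omega, ?_⟩
        rw [child_eq_FT hl hh, child_eq_FT hl hh, childFT_top, childFT_MR]
        exact ⟨rfl, rfl⟩
      · refine ⟨4*i'+2, by omega, by omega, ?_⟩
        rw [child_eq_FT hl hh, child_eq_FT hl hh, childFT_MR, childFT_MR]
        exact ⟨rfl, rfl⟩
    · rw [childFT_AL] at hhi; simp [mkAL] at hhi
  · -- TF
    rw [child_eq_TF hl hh] at hhi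
    rcases classTF k with rfl | rfl | ⟨i, rfl⟩ | ⟨j, rfl⟩ | ⟨j, rfl⟩
    · rw [childTF_SR] at hhi; simp [mkSR] at hhi
    · rw [childTF_bot] at hhi; simp [mkBot] at hhi
    · rcases i with _ | i'
      · refine ⟨0, by omega, by omega, ?_⟩
        rw [child_eq_TF hl hh, child_eq_TF hl hh, childTF_SR, childTF_MR]
        exact ⟨rfl, rfl⟩
      · refine ⟨2*i'+2, by omega, by omega, ?_⟩
        rw [child_eq_TF hl hh, child_eq_TF hl hh, childTF_MR, childTF_MR]
        exact ⟨rfl, rfl⟩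
    · rw [childTF_AL] at hhi; simp [mkAL] at hhi
    · rw [childTF_AR] at hhi; simp [mkAR] at hhi
  · -- TT
    rw [child_eq_TT hl hh] at hhi
    rcases classTT k with rfl | rfl | ⟨i, rfl⟩ | ⟨j, rfl⟩
    · rw [childTT_top] at hhi; simp [mkTop] at hhi
    · rw [childTT_bot] at hhi; simp [mkBot] at hhi
    · rcases i with _ | i'
      · refine ⟨0, by omega, by omega, ?_⟩
        rw [child_eq_TT hl hh, child_eq_TT hl hh, childTT_top, childTT_MR]
        exact ⟨rfl, rfl⟩
      · refine ⟨2*i'+2, by omega, by omega, ?_⟩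
        rw [child_eq_TT hl hh, child_eq_TT hl hh, childTT_MR, childTT_MR]
        exact ⟨rfl, rfl⟩
    · rw [childTT_AL] at hhi; simp [mkAL] at hhi

end Service
/-! ### the root, the sets C n, and closedness -/

noncomputable def root : Cfg := ⟨-1, 1, false, false, 0⟩

lemma root_valid : root.valid := by norm_num [Cfg.valid, root]

noncomputable def reg (p : List ℕ) : Cfg := regFrom root p

lemma reg_valid (p : List ℕ) : (reg p).valid := regFrom_valid root_valid p

lemma reg_append (p q : List ℕ) : reg (p ++ q) = regFrom (reg p) q := by
  unfold reg; rw [regFrom_append]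

lemma reg_concat (p : List ℕ) (k : ℕ) : reg (p ++ [k]) = child (reg p) k := by
  rw [reg_append]; rfl

lemma reg_tau (p : List ℕ) : (reg p).tau = wt p := by
  unfold reg; rw [regFrom_tau]; norm_num [root]

/-- the section-defining family -/
def Cn (n : ℕ) : Set ℝ := {x | ∃ p, (reg p).mem x ∧ n ∈ commits p}

lemma closure_memset {c : Cfg} (hv : c.valid) :
    closure {x | c.mem x} = Set.Icc c.lo c.hi := by
  have hne : c.lo ≠ c.hi := ne_of_lt hv
  rcases hl : c.loIn with _ | _ <;> rcases hh : c.hiIn with _ | _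
  · have h : {x | c.mem x} = Set.Ioo c.lo c.hi := by
      ext x; simp [Cfg.mem, hl, hh, Set.mem_Ioo]
    rw [h]; exact closure_Ioo hne
  · have h : {x | c.mem x} = Set.Ioc c.lo c.hi := by
      ext x; simp [Cfg.mem, hl, hh, Set.mem_Ioc]
    rw [h]; exact closure_Ioc hne
  · have h : {x | c.mem x} = Set.Ico c.lo c.hi := by
      ext x; simp [Cfg.mem, hl, hh, Set.mem_Ico]
    rw [h]; exact closure_Ico hne
  · have h : {x | c.mem x} = Set.Icc c.lo c.hi := by
      ext x; simp [Cfg.mem, hl, hh, Set.mem_Icc]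
    rw [h]; exact closure_Icc c.lo c.hi

lemma memset_sub_closure (c : Cfg) {x : ℝ} (h : c.mem x) : x ∈ Set.Icc c.lo c.hi :=
  mem_bounds h

/-- the key service lemma at path level -/
lemma closure_defect (p₀ : List ℕ) (k : ℕ) {y : ℝ}
    (hy : y ∈ closure {x | (reg (p₀ ++ [k])).mem x}) :
    ∃ q, (reg q).mem y ∧ (wt p₀ + k) ∈ commits q := by
  have hv₀ := reg_valid p₀
  have hv : (reg (p₀ ++ [k])).valid := reg_valid _
  rw [closure_memset hv] at hy
  obtain ⟨h1, h2⟩ := hy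
  by_cases hmem : (reg (p₀ ++ [k])).mem y
  · refine ⟨p₀ ++ [k], hmem, ?_⟩
    unfold commits
    rw [commitsAux_append]
    right
    simp [commitsAux]
  · have hends : ((reg (p₀ ++ [k])).loIn = false ∧ y = (reg (p₀ ++ [k])).lo) ∨
        ((reg (p₀ ++ [k])).hiIn = false ∧ y = (reg (p₀ ++ [k])).hi) := by
      by_cases hylo : y = (reg (p₀ ++ [k])).lo
      · left
        refine ⟨?_, hylo⟩
        by_contra hbad
        have hl' : (reg (p₀ ++ [k])).loIn = true := by
          revert hbad; cases (reg (p₀ ++ [k])).loIn <;> simp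
        apply hmem
        unfold Cfg.mem
        rw [hl']
        refine ⟨by simp [hylo], ?_⟩
        split_ifs
        · rw [hylo]; exact le_of_lt hv
        · rw [hylo]; exact hv
      · by_cases hyhi : y = (reg (p₀ ++ [k])).hi
        · right
          refine ⟨?_, hyhi⟩
          by_contra hbad
          have hh' : (reg (p₀ ++ [k])).hiIn = true := by
            revert hbad; cases (reg (p₀ ++ [k])).hiIn <;> simp
          apply hmem
          unfold Cfg.mem
          rw [hh']
          refine ⟨?_, by simp [hyhi]⟩
          split_ifs
          · rw [hyhi]; exact le_of_lt hv
          · rw [hyhi]; exact hv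
        · exfalso
          apply hmem
          have hlt1 : (reg (p₀ ++ [k])).lo < y := lt_of_le_of_ne h1 (Ne.symm hylo)
          have hlt2 : y < (reg (p₀ ++ [k])).hi := lt_of_le_of_ne h2 hyhi
          unfold Cfg.mem
          constructor
          · split_ifs
            · linarith
            · exact hlt1
          · split_ifs
            · linarith
            · exact hlt2
    rcases hends with ⟨hfl, hye⟩ | ⟨hfh, hye⟩
    · -- excluded lower endpoint
      rw [reg_concat] at hfl hye
      obtain ⟨k', hk', hin, heq⟩ := service_lo hv₀ hfl
      refine ⟨p₀ ++ [k'] ++ List.replicate (k - k') 0, ?_, ?_⟩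
      · have hreg : reg (p₀ ++ [k'] ++ List.replicate (k - k') 0)
            = regFrom (child (reg p₀) k') (List.replicate (k - k') 0) := by
          rw [reg_append, reg_concat]
        rw [hreg]
        have := top_chain (child_valid hv₀ k') hin (k - k')
        rw [heq, ← hye] at this
        exact this
      · unfold commits
        rw [commitsAux_append]
        right
        have hbase : 0 + wt (p₀ ++ [k']) = wt p₀ + k' + 1 := by
          have h1 := wt_append p₀ [k']
          have h2 : wt [k'] = k' + 1 := by simp
          omega
        rw [hbase]
        have hm := commits_replicate0 (t := wt p₀ + k' + 1) (m := k - k' - 1)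
          (d := k - k') (by omega)
        have he : wt p₀ + k' + 1 + (k - k' - 1) = wt p₀ + k := by omega
        rw [he] at hm
        exact hm
    · -- excluded upper endpoint
      rw [reg_concat] at hfh hye
      obtain ⟨k', hk', hpar, hin, heq⟩ := service_hi hv₀ hfh
      refine ⟨p₀ ++ [k'] ++ List.replicate ((k - k')/2) 1, ?_, ?_⟩
      · have hreg : reg (p₀ ++ [k'] ++ List.replicate ((k - k')/2) 1)
            = regFrom (child (reg p₀) k') (List.replicate ((k - k')/2) 1) := by
          rw [reg_append, reg_concat]
        rw [hreg]
        have := bot_chain (child_valid hv₀ k') hin ((k - k')/2)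
        rw [heq, ← hye] at this
        exact this
      · unfold commits
        rw [commitsAux_append]
        right
        have hbase : 0 + wt (p₀ ++ [k']) = wt p₀ + k' + 1 := by
          have h1 := wt_append p₀ [k']
          have h2 : wt [k'] = k' + 1 := by simp
          omega
        rw [hbase]
        have hm := commits_replicate1 (t := wt p₀ + k' + 1) (m := (k - k' - 2)/2)
          (d := (k - k')/2) (by omega)
        have he : wt p₀ + k' + 1 + 2*((k - k' - 2)/2) + 1 = wt p₀ + k := by omega
        rw [he] at hm
        exact hm

lemma Cn_eq (n : ℕ) : Cn n = ⋃ p ∈ {p : List ℕ | wt p = n + 1}, closure {x | (reg p).mem x} := by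
  ext x
  simp only [Set.mem_iUnion, Set.mem_setOf_eq, exists_prop]
  constructor
  · rintro ⟨q, hq, hn⟩
    obtain ⟨q₀, r, rfl, hwq⟩ := exists_committing_prefix (t := 0) hn
    refine ⟨q₀, by omega, subset_closure ?_⟩
    rw [reg_append] at hq
    exact regFrom_mem_sub (reg_valid q₀) r hq
  · rintro ⟨p, hp, hx⟩
    have hp0 : p ≠ [] := by
      intro h; rw [h] at hp; simp at hp
    obtain ⟨p₀, k, hpk⟩ := List.eq_nil_or_concat p |>.resolve_left hp0
    rw [List.concat_eq_append] at hpk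
    subst hpk
    obtain ⟨q, hq, hn⟩ := closure_defect p₀ k hx
    refine ⟨q, hq, ?_⟩
    have hw : wt (p₀ ++ [k]) = wt p₀ + k + 1 := by simp; omega
    have he : wt p₀ + k = n := by omega
    rw [← he]
    exact hn

lemma Cn_closed (n : ℕ) : IsClosed (Cn n) := by
  rw [Cn_eq]
  apply Set.Finite.isClosed_biUnion
  · apply Set.Finite.subset (finite_wt_eq (n+1))
    intro p hp
    exact hp
  · intro p _
    exact isClosed_closure
/-! ### sections -/

lemma reg_comparable {p q : List ℕ} {x : ℝ}
    (hp : (reg p).mem x) (hq : (reg q).mem x) : p <+: q ∨ q <+: p :=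
  regFrom_comparable root_valid hp hq

lemma g_mem_reg_iff {p q : List ℕ} : (reg q).mem ((reg p).g) ↔ q <+: p := by
  constructor
  · intro h
    have hp : (reg p).mem ((reg p).g) := g_mem (reg_valid p)
    rcases reg_comparable h hp with h1 | h1
    · exact h1
    · obtain ⟨r, rfl⟩ := h1
      rcases List.eq_nil_or_concat r with rfl | ⟨r', k', hr⟩
      · rw [List.append_nil]
      · exfalso
        rw [reg_append] at h
        have hne := regFrom_mem_ne_g (reg_valid p) (by subst hr; simp) h
        exact hne rfl
  · rintro ⟨r, rfl⟩
    have h := g_mem (reg_valid (q ++ r))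
    exact regFrom_mem_sub (reg_valid q) r (by rw [← reg_append]; exact h)

lemma sec_grid (p : List ℕ) (n : ℕ) : (reg p).g ∈ Cn n ↔ n ∈ commits p := by
  constructor
  · rintro ⟨q, hq, hn⟩
    exact commits_prefix_subset (g_mem_reg_iff.mp hq) hn
  · intro hn
    exact ⟨p, g_mem (reg_valid p), hn⟩

lemma commits_finite (p : List ℕ) : (commits p).Finite := by
  apply Set.Finite.subset (Set.finite_Iio (wt p))
  intro n hn
  have := mem_commitsAux_lt (t := 0) hn
  simpa using this

lemma mem_commits_concat (p : List ℕ) (k : ℕ) : (wt p + k) ∈ commits (p ++ [k]) := by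
  unfold commits
  rw [commitsAux_append]
  right
  simp [commitsAux]

/-- the next code is forced by the section -/
lemma forced_code {y : ℝ} {p : List ℕ} {S : Set ℕ} {z₀ : ℕ}
    (hsec : ∀ n, (y ∈ Cn n ↔ n ∈ S))
    (hnext : wt p + z₀ ∈ S)
    (hmin : ∀ n ∈ S, wt p ≤ n → wt p + z₀ ≤ n)
    {k' : ℕ} (hy : (child (reg p) k').mem y) : k' = z₀ := by
  have hy' : (reg (p ++ [k'])).mem y := by rw [reg_concat]; exact hy
  have hn' : (wt p + k') ∈ S := by
    rw [← hsec]
    exact ⟨p ++ [k'], hy', mem_commits_concat p k'⟩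
  have hk'ge : z₀ ≤ k' := by
    have := hmin _ hn' (by omega)
    omega
  rcases Nat.eq_or_lt_of_le hk'ge with h | hlt
  · omega
  · exfalso
    have hnstar : (wt p + z₀) ∈ {n | y ∈ Cn n} := by rw [Set.mem_setOf_eq, hsec]; exact hnext
    obtain ⟨q, hq, hnq⟩ := hnstar
    rcases reg_comparable hq hy' with h1 | h1
    · have hsub := commits_prefix_subset h1 hnq
      unfold commits at hsub
      rw [commitsAux_append] at hsub
      rcases hsub with h2 | h2
      · have := mem_commitsAux_lt h2
        omega
      · simp only [commitsAux_cons, commitsAux_nil, Set.mem_insert_iff, Set.mem_empty_iff_false,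
          or_false] at h2
        omega
    · obtain ⟨r, hr⟩ := h1
      rw [← hr] at hnq
      unfold commits at hnq
      rw [commitsAux_append] at hnq
      rcases hnq with h2 | h2
      · rw [commitsAux_append] at h2
        rcases h2 with h3 | h3
        · have := mem_commitsAux_lt h3
          omega
        · simp only [commitsAux_cons, commitsAux_nil, Set.mem_insert_iff, Set.mem_empty_iff_false,
            or_false] at h3
          omega
      · have := mem_commitsAux_ge h2
        have hw : wt (p ++ [k']) = wt p + k' + 1 := by simp; omega
        omega

/-- uniqueness, finite case -/
lemma unique_finite {y : ℝ} {u v : List ℕ}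
    (hsec : ∀ n, (y ∈ Cn n ↔ n ∈ commits (u ++ v)))
    (hmem : (reg u).mem y) : y = (reg (u ++ v)).g := by
  induction v generalizing u with
  | nil =>
    rw [List.append_nil] at hsec ⊢
    rcases child_cover (reg_valid u) hmem with h | ⟨k', hk'⟩
    · exact h
    · exfalso
      have hy' : (reg (u ++ [k'])).mem y := by rw [reg_concat]; exact hk'
      have : (wt u + k') ∈ commits u := by
        rw [← hsec]
        exact ⟨u ++ [k'], hy', mem_commits_concat u k'⟩
      have := mem_commitsAux_lt (t := 0) this
      omega
  | cons z₀ v' ih =>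
    rcases child_cover (reg_valid u) hmem with h | ⟨k', hk'⟩
    · exfalso
      subst h
      have h1 : (wt u + z₀) ∈ commits (u ++ z₀ :: v') := by
        unfold commits
        rw [commitsAux_append]
        right
        rw [commitsAux_cons, Set.mem_insert_iff]
        left
        omega
      have h2 := (hsec (wt u + z₀)).mpr h1
      have h3 := (sec_grid u (wt u + z₀)).mp h2
      have := mem_commitsAux_lt (t := 0) h3
      omega
    · have hknext : wt u + z₀ ∈ commits (u ++ z₀ :: v') := by
        unfold commits
        rw [commitsAux_append]
        right
        rw [commitsAux_cons, Set.mem_insert_iff]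
        left
        omega
      have hmin : ∀ n ∈ commits (u ++ z₀ :: v'), wt u ≤ n → wt u + z₀ ≤ n := by
        intro n hn hge
        unfold commits at hn
        rw [commitsAux_append] at hn
        rcases hn with h2 | h2
        · have := mem_commitsAux_lt h2
          omega
        · rw [commitsAux_cons, Set.mem_insert_iff] at h2
          rcases h2 with h3 | h3
          · omega
          · have := mem_commitsAux_ge h3
            omega
      have hkz : k' = z₀ := forced_code hsec hknext hmin hk'
      subst hkz
      have hmem' : (reg (u ++ [k'])).mem y := by rw [reg_concat]; exact hk'
      have hres := ih (u := u ++ [k'])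
        (by intro n; rw [hsec]; rw [List.append_assoc]; simp) hmem'
      rw [List.append_assoc] at hres
      simpa using hres
/-! ### infinite sets : branches -/

noncomputable def zOf (S : Set ℕ) : ℕ → ℕ
  | 0 => Nat.nth (· ∈ S) 0
  | (j+1) => Nat.nth (· ∈ S) (j+1) - Nat.nth (· ∈ S) j - 1

noncomputable def zpre (z : ℕ → ℕ) (m : ℕ) : List ℕ := (List.range m).map z

@[simp] lemma zpre_zero (z : ℕ → ℕ) : zpre z 0 = [] := rfl

lemma zpre_succ (z : ℕ → ℕ) (m : ℕ) : zpre z (m+1) = zpre z m ++ [z m] := by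
  simp [zpre, List.range_succ]

@[simp] lemma zpre_length (z : ℕ → ℕ) (m : ℕ) : (zpre z m).length = m := by
  simp [zpre]

section InfiniteSets
variable {S : Set ℕ}

lemma nth_S_lt (hS : S.Infinite) {i j : ℕ} (h : i < j) :
    Nat.nth (· ∈ S) i < Nat.nth (· ∈ S) j :=
  (Nat.nth_lt_nth hS).mpr h

/-- wt of branch prefixes -/
lemma wtz_add (hS : S.Infinite) (m : ℕ) :
    wt (zpre (zOf S) m) + zOf S m = Nat.nth (· ∈ S) m := by
  induction m with
  | zero => simp [zOf]
  | succ m ih =>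
    rw [zpre_succ, wt_append]
    have h1 : wt [zOf S m] = zOf S m + 1 := by simp
    rw [h1]
    have h2 : zOf S (m+1) = Nat.nth (· ∈ S) (m+1) - Nat.nth (· ∈ S) m - 1 := rfl
    have h3 := nth_S_lt hS (show m < m + 1 by omega)
    omega

lemma commits_zpre_subset (hS : S.Infinite) (m : ℕ) : commits (zpre (zOf S) m) ⊆ S := by
  induction m with
  | zero => simp [commits]
  | succ m ih =>
    rw [zpre_succ]
    unfold commits
    rw [commitsAux_append]
    rintro n (hn | hn)
    · exact ih hn
    · simp only [commitsAux_cons, commitsAux_nil, Set.mem_insert_iff,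
        Set.mem_empty_iff_false, or_false] at hn
      have := wtz_add hS m
      have hmem := Nat.nth_mem_of_infinite (p := (· ∈ S)) hS m
      have : n = Nat.nth (· ∈ S) m := by omega
      rw [this]
      exact hmem

lemma mem_commits_zpre (hS : S.Infinite) {n : ℕ} (hn : n ∈ S) :
    ∃ m, n ∈ commits (zpre (zOf S) m) := by
  have hr := Nat.range_nth_of_infinite (p := (· ∈ S)) hS
  have : n ∈ Set.range (Nat.nth (· ∈ S)) := by rw [hr]; exact hn
  obtain ⟨j, hj⟩ := this
  refine ⟨j + 1, ?_⟩
  rw [zpre_succ]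
  unfold commits
  rw [commitsAux_append]
  right
  simp only [commitsAux_cons, commitsAux_nil, Set.mem_insert_iff, Set.mem_empty_iff_false,
    or_false]
  have := wtz_add hS j
  omega

lemma hmin_inf (hS : S.Infinite) (m : ℕ) :
    ∀ n ∈ S, wt (zpre (zOf S) m) ≤ n → wt (zpre (zOf S) m) + zOf S m ≤ n := by
  intro n hn hge
  rw [wtz_add hS m]
  have hr := Nat.range_nth_of_infinite (p := (· ∈ S)) hS
  have : n ∈ Set.range (Nat.nth (· ∈ S)) := by rw [hr]; exact hn
  obtain ⟨j, hj⟩ := this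
  rcases Nat.lt_or_ge j m with hjm | hjm
  · exfalso
    rcases Nat.eq_zero_or_pos m with rfl | hm
    · omega
    · obtain ⟨m', rfl⟩ : ∃ m', m = m' + 1 := ⟨m - 1, by omega⟩
      have hw : wt (zpre (zOf S) (m'+1)) = Nat.nth (· ∈ S) m' + 1 := by
        have h1 := wtz_add hS (m'+1)
        have h2 := wtz_add hS m'
        rw [zpre_succ, wt_append] at h1 ⊢
        have h3 : wt [zOf S m'] = zOf S m' + 1 := by simp
        rw [h3]
        omega
      have hjm' : j ≤ m' := by omega
      have : Nat.nth (· ∈ S) j ≤ Nat.nth (· ∈ S) m' := (Nat.nth_le_nth hS).mpr hjm'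
      omega
  · have : Nat.nth (· ∈ S) m ≤ Nat.nth (· ∈ S) j := (Nat.nth_le_nth hS).mpr hjm
    omega

lemma root_mem_iff (x : ℝ) : root.mem x ↔ (-1 < x ∧ x < 1) := by
  unfold Cfg.mem root
  simp

/-- uniqueness, infinite case : the point follows the branch -/
lemma unique_infinite (hS : S.Infinite) {y : ℝ} (hy : root.mem y)
    (hsec : ∀ n, (y ∈ Cn n ↔ n ∈ S)) :
    ∀ m, (reg (zpre (zOf S) m)).mem y := by
  intro m
  induction m with
  | zero => exact hy
  | succ m ih =>
    rcases child_cover (reg_valid (zpre (zOf S) m)) ih with h | ⟨k', hk'⟩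
    · exfalso
      apply hS
      have hSeq : S = commits (zpre (zOf S) m) := by
        ext n
        rw [← hsec n, h, sec_grid]
      rw [hSeq]
      exact commits_finite _
    · have hnext : wt (zpre (zOf S) m) + zOf S m ∈ S := by
        rw [wtz_add hS m]
        exact Nat.nth_mem_of_infinite hS m
      have hkz := forced_code hsec hnext (hmin_inf hS m) hk'
      subst hkz
      rw [zpre_succ, reg_concat]
      exact hk'

end InfiniteSets

/-! ### branch points -/

lemma Icc_child_sub {c : Cfg} (hv : c.valid) (k : ℕ) :
    Set.Icc (child c k).lo (child c k).hi ⊆ {x | c.mem x} := by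
  obtain ⟨_, hlo, hhi, _, _⟩ := child_pack hv k
  intro x hx
  exact mem_of_Icc hlo hhi hx

lemma branch_point (z : ℕ → ℕ) : ∃ x : ℝ, ∀ m, (reg (zpre z m)).mem x := by
  have hnested : ∀ m, Set.Icc (reg (zpre z (m+1))).lo (reg (zpre z (m+1))).hi ⊆
      {x | (reg (zpre z m)).mem x} := by
    intro m
    rw [zpre_succ, reg_concat]
    exact Icc_child_sub (reg_valid _) _
  have h1 : ∀ m, Set.Icc (reg (zpre z (m+1))).lo (reg (zpre z (m+1))).hi ⊆
      Set.Icc (reg (zpre z m)).lo (reg (zpre z m)).hi := by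
    intro m x hx
    exact mem_bounds (hnested m hx)
  have h2 : ∀ m, (Set.Icc (reg (zpre z m)).lo (reg (zpre z m)).hi).Nonempty := by
    intro m
    exact Set.nonempty_Icc.mpr (le_of_lt (reg_valid _))
  obtain ⟨x, hx⟩ := IsCompact.nonempty_iInter_of_sequence_nonempty_isCompact_isClosed
    (fun m => Set.Icc (reg (zpre z m)).lo (reg (zpre z m)).hi) h1 h2
    isCompact_Icc (fun m => isClosed_Icc)
  refine ⟨x, fun m => ?_⟩
  have hx1 : x ∈ Set.Icc (reg (zpre z (m+1))).lo (reg (zpre z (m+1))).hi := by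
    exact Set.mem_iInter.mp hx (m+1)
  exact hnested m hx1

lemma sec_branch {z : ℕ → ℕ} {x : ℝ} (hx : ∀ m, (reg (zpre z m)).mem x) (n : ℕ) :
    x ∈ Cn n ↔ ∃ m, n ∈ commits (zpre z m) := by
  constructor
  · rintro ⟨q, hq, hn⟩
    refine ⟨q.length, ?_⟩
    have hcomp := reg_comparable hq (hx q.length)
    have hlen : q.length = (zpre z q.length).length := by simp
    rcases hcomp with h | h
    · rw [← h.eq_of_length hlen]
      exact hn
    · rw [h.eq_of_length hlen.symm]
      exact hn
  · rintro ⟨m, hn⟩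
    exact ⟨zpre z m, hx m, hn⟩

/-! ### spans and uniqueness of branch points -/

lemma regFrom_span {c : Cfg} (hv : c.valid) (p : List ℕ) :
    (regFrom c p).hi - (regFrom c p).lo ≤ (c.hi - c.lo)/2^(p.length) := by
  induction p generalizing c with
  | nil => simp
  | cons k p ih =>
    rw [regFrom_cons]
    simp only [List.length_cons]
    have h1 := ih (c := child c k) (child_valid hv k)
    have h2 := (child_pack hv k).2.2.2.2
    calc (regFrom (child c k) p).hi - (regFrom (child c k) p).lo
        ≤ ((child c k).hi - (child c k).lo)/2^p.length := h1
      _ ≤ ((c.hi - c.lo)/2)/2^p.length := by gcongr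
      _ = (c.hi - c.lo)/2^(p.length + 1) := by
          rw [pow_succ]
          ring

lemma branch_point_unique {z : ℕ → ℕ} {x y : ℝ}
    (hx : ∀ m, (reg (zpre z m)).mem x) (hy : ∀ m, (reg (zpre z m)).mem y) : x = y := by
  by_contra hne
  have hd : 0 < |x - y| := abs_pos.mpr (sub_ne_zero.mpr hne)
  obtain ⟨m, hm⟩ := exists_small_pow (c := (2:ℝ)) (by norm_num) hd
  obtain ⟨hbx1, hbx2⟩ := mem_bounds (hx m)
  obtain ⟨hby1, hby2⟩ := mem_bounds (hy m)
  have hspan : (reg (zpre z m)).hi - (reg (zpre z m)).lo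
      ≤ (root.hi - root.lo)/2^((zpre z m).length) := regFrom_span root_valid _
  have hroot : (root.hi - root.lo : ℝ) = 2 := by norm_num [root]
  rw [hroot, zpre_length] at hspan
  have habs : |x - y| ≤ (reg (zpre z m)).hi - (reg (zpre z m)).lo :=
    abs_sub_le_iff.mpr ⟨by linarith, by linarith⟩
  linarith
/-! ### final assembly -/

lemma finite_set_path {S : Set ℕ} (hS : S.Finite) : ∃ p : List ℕ, commits p = S := by
  classical
  have hsort : (hS.toFinset.sort (· ≤ ·)).Pairwise (· < ·) := (Finset.sortedLT_sort _).pairwise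
  have hmem : ∀ a, a ∈ hS.toFinset.sort (· ≤ ·) ↔ a ∈ S := by
    intro a
    rw [Finset.mem_sort, Set.Finite.mem_toFinset]
  refine ⟨diffsFrom 0 (hS.toFinset.sort (· ≤ ·)), ?_⟩
  unfold commits
  rw [commitsAux_diffsFrom hsort (fun a _ => Nat.zero_le a)]
  ext n
  simp only [Set.mem_setOf_eq]
  exact hmem n

lemma reg_mem_root {p : List ℕ} {x : ℝ} (h : (reg p).mem x) : root.mem x :=
  regFrom_mem_sub root_valid p h

end UU

theorem uu_closed_openInterval_nat :
    ∃ V : Set ((Set.Ioo (-1:ℝ) 1) × ℕ), IsClosed V ∧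
      ∀ S : Set ℕ, ∃! x : Set.Ioo (-1:ℝ) 1, {n : ℕ | (x, n) ∈ V} = S := by
  classical
  refine ⟨{q : (Set.Ioo (-1:ℝ) 1) × ℕ | (q.1 : ℝ) ∈ UU.Cn q.2}, ?_, ?_⟩
  · -- closedness
    rw [← isOpen_compl_iff, isOpen_iff_forall_mem_open]
    rintro ⟨x, n⟩ hx
    refine ⟨(Subtype.val ⁻¹' (UU.Cn n)ᶜ) ×ˢ ({n} : Set ℕ), ?_, ?_, ?_⟩
    · rintro ⟨y, m⟩ ⟨hy1, hy2⟩
      simp only [Set.mem_singleton_iff] at hy2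
      subst hy2
      exact hy1
    · exact (((UU.Cn_closed n).isOpen_compl).preimage continuous_subtype_val).prod
        (isOpen_discrete _)
    · exact ⟨hx, rfl⟩
  · intro S
    rcases S.finite_or_infinite with hS | hS
    · -- finite sets live at grid points
      obtain ⟨p, hp⟩ := UU.finite_set_path hS
      have hgmem : UU.root.mem ((UU.reg p).g) := UU.reg_mem_root (UU.g_mem (UU.reg_valid p))
      have hgIoo : (UU.reg p).g ∈ Set.Ioo (-1:ℝ) 1 := by
        rw [Set.mem_Ioo]
        exact (UU.root_mem_iff _).mp hgmem
      refine ⟨⟨(UU.reg p).g, hgIoo⟩, ?_, ?_⟩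
      · ext n
        simp only [Set.mem_setOf_eq]
        rw [← hp]
        exact UU.sec_grid p n
      · rintro ⟨y, hy⟩ hsec
        have hsec' : ∀ n, ((y : ℝ) ∈ UU.Cn n ↔ n ∈ UU.commits ([] ++ p)) := by
          intro n
          have := Set.ext_iff.mp hsec n
          simp only [Set.mem_setOf_eq] at this
          rw [List.nil_append, hp]
          exact this
        have hymem : (UU.reg []).mem y := by
          have : UU.root.mem y := (UU.root_mem_iff y).mpr (Set.mem_Ioo.mp hy)
          exact this
        have := UU.unique_finite hsec' hymem
        rw [List.nil_append] at this
        exact Subtype.ext this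
    · -- infinite sets live at branch points
      obtain ⟨x, hx⟩ := UU.branch_point (UU.zOf S)
      have hxroot : UU.root.mem x := hx 0
      have hxIoo : x ∈ Set.Ioo (-1:ℝ) 1 := by
        rw [Set.mem_Ioo]
        exact (UU.root_mem_iff _).mp hxroot
      have hsecx : ∀ n, (x ∈ UU.Cn n ↔ n ∈ S) := by
        intro n
        rw [UU.sec_branch hx n]
        constructor
        · rintro ⟨m, hm⟩
          exact UU.commits_zpre_subset hS m hm
        · intro hn
          exact UU.mem_commits_zpre hS hn
      refine ⟨⟨x, hxIoo⟩, ?_, ?_⟩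
      · ext n
        simp only [Set.mem_setOf_eq]
        exact hsecx n
      · rintro ⟨y, hy⟩ hsec
        have hsec' : ∀ n, ((y : ℝ) ∈ UU.Cn n ↔ n ∈ S) := by
          intro n
          have := Set.ext_iff.mp hsec n
          simp only [Set.mem_setOf_eq] at this
          exact this
        have hyroot : UU.root.mem y := (UU.root_mem_iff y).mpr (Set.mem_Ioo.mp hy)
        have hyall := UU.unique_infinite hS hyroot hsec'
        exact Subtype.ext (UU.branch_point_unique hyall hx)
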